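/- arXiv:2409.08085 — 8 statements merged into one kernel-verified Lean document; each statement's English description precedes it below -/
import Mathlib

section
/- For all integers n ≥ 2, the generating polynomial h_n(x;t) = ∑_{d=1}^{n-1} g_{n,d}(t) x^d satisfies the recurrence h_{n+2}(x;t) = (1+x)·h_{n+1}(x;t) + t·x·h_n(x;t). -/
open Polynomial Finset

/-- Speyer's g-polynomial of the uniform matroid `U_{n,d}`, evaluated at `t`. -/
noncomputable def speyerG (n d : ℕ) (t : ℝ) : ℝ :=
  ∑ i ∈ Finset.Icc 1 d,
    ((n - i - 1).choose (d - i) : ℝ) * ((n - d - 1).choose (i - 1) : ℝ) * t ^ i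

/-- The generating polynomial `h_n(x;t) = ∑_{d=1}^{n-1} g_{n,d}(t) x^d` (in `x`). -/
noncomputable def hPoly (n : ℕ) (t : ℝ) : Polynomial ℝ :=
  ∑ d ∈ Finset.Icc 1 (n - 1), Polynomial.C (speyerG n d t) * Polynomial.X ^ d

lemma speyerG_zero (m : ℕ) (t : ℝ) : speyerG m 0 t = 0 := by
  simp [speyerG]

lemma speyerG_eq_zero_of_le (m d : ℕ) (hm : 2 ≤ m) (hd : m ≤ d) (t : ℝ) :
    speyerG m d t = 0 := by
  unfold speyerG
  apply Finset.sum_eq_zero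
  intro i hi
  simp only [Finset.mem_Icc] at hi
  rcases eq_or_lt_of_le hi.1 with h1 | h2
  · have h : (m - 1 - 1).choose (d - 1) = 0 := Nat.choose_eq_zero_of_lt (by omega)
    rw [← h1, h]
    simp
  · have h0 : m - d - 1 = 0 := by omega
    have h : (0 : ℕ).choose (i - 1) = 0 := Nat.choose_eq_zero_of_lt (by omega)
    rw [h0, h]
    simp

lemma pascal (a b : ℕ) : (a + 1).choose (b + 1) = a.choose b + a.choose (b + 1) :=
  Nat.choose_succ_succ a b

lemma key (n d i : ℕ) (hn : 2 ≤ n) (hd2 : 2 ≤ d) (hdn : d ≤ n + 1)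
    (hi1 : 1 ≤ i) (hid : i ≤ d) :
    (n + 1 - i).choose (d - i) * (n + 1 - d).choose (i - 1)
      = (n - i).choose (d - i) * (n - d).choose (i - 1)
        + (if i ≤ d - 1 then (n - i).choose (d - 1 - i) * (n + 1 - d).choose (i - 1) else 0)
        + (if 2 ≤ i then (n - i).choose (d - i) * (n - d).choose (i - 2) else 0) := by
  rcases eq_or_lt_of_le hi1 with h1 | h2
  · -- i = 1
    subst h1
    rw [if_pos (show 1 ≤ d - 1 by omega), if_neg (show ¬ (2 ≤ 1) by omega)]
    have P : n.choose (d - 1) = (n - 1).choose (d - 2) + (n - 1).choose (d - 1) := by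
      have h := pascal (n - 1) (d - 2)
      rwa [show n - 1 + 1 = n by omega, show d - 2 + 1 = d - 1 by omega] at h
    rw [show n + 1 - 1 = n by omega, show d - 1 - 1 = d - 2 by omega,
      show (1 : ℕ) - 1 = 0 by omega]
    simp only [Nat.choose_zero_right, mul_one, add_zero]
    omega
  · -- 2 ≤ i
    rw [if_pos (show 2 ≤ i by omega)]
    rcases eq_or_lt_of_le hid with hieq | hilt
    · -- i = d
      subst hieq
      rw [if_neg (show ¬ (i ≤ i - 1) by omega), show i - i = 0 by omega]
      simp only [Nat.choose_zero_right, one_mul, add_zero]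
      rcases eq_or_lt_of_le hdn with hdeq | hdlt
      · -- i = n + 1
        rw [show n + 1 - i = 0 by omega, show n - i = 0 by omega,
          Nat.choose_eq_zero_of_lt (show 0 < i - 1 by omega)]
        simp [Nat.choose_eq_zero_of_lt (show 0 < i - 2 by omega)]
      · -- i ≤ n
        have P : (n + 1 - i).choose (i - 1)
            = (n - i).choose (i - 2) + (n - i).choose (i - 1) := by
          have h := pascal (n - i) (i - 2)
          rwa [show n - i + 1 = n + 1 - i by omega, show i - 2 + 1 = i - 1 by omega] at h
        omega
    · -- 2 ≤ i, i < d
      rw [if_pos (show i ≤ d - 1 by omega)]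
      rcases eq_or_lt_of_le hdn with hdeq | hdlt
      · -- d = n + 1
        rw [show n + 1 - d = 0 by omega, show n - d = 0 by omega,
          Nat.choose_eq_zero_of_lt (show 0 < i - 1 by omega)]
        simp only [mul_zero, zero_add, add_zero, zero_mul]
        rcases eq_or_lt_of_le (show 2 ≤ i from h2) with hi2 | hi3
        · -- i = 2
          rw [show i - 2 = 0 by omega, Nat.choose_zero_right, mul_one,
            show n - i = n - 2 by omega,
            Nat.choose_eq_zero_of_lt (show n - 2 < d - i by omega)]
        · rw [Nat.choose_eq_zero_of_lt (show 0 < i - 2 by omega)]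
          simp
      · -- d ≤ n : double Pascal
        have P1 : (n + 1 - i).choose (d - i)
            = (n - i).choose (d - i - 1) + (n - i).choose (d - i) := by
          have h := pascal (n - i) (d - i - 1)
          rwa [show n - i + 1 = n + 1 - i by omega, show d - i - 1 + 1 = d - i by omega] at h
        have P2 : (n + 1 - d).choose (i - 1)
            = (n - d).choose (i - 2) + (n - d).choose (i - 1) := by
          have h := pascal (n - d) (i - 2)
          rwa [show n - d + 1 = n + 1 - d by omega, show i - 2 + 1 = i - 1 by omega] at h
        rw [P1, P2, show d - 1 - i = d - i - 1 by omega]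
        ring

lemma speyerG_rec (n e : ℕ) (hn : 2 ≤ n) (t : ℝ) :
    speyerG (n + 2) (e + 1) t
      = speyerG (n + 1) (e + 1) t + speyerG (n + 1) e t + t * speyerG n e t := by
  rcases Nat.eq_zero_or_pos e with rfl | he
  · simp only [speyerG_zero, mul_zero, add_zero]
    unfold speyerG
    norm_num
  rcases le_or_gt (n + 2) (e + 1) with hbig | hsmall
  · rw [speyerG_eq_zero_of_le (n + 2) (e + 1) (by omega) hbig,
      speyerG_eq_zero_of_le (n + 1) (e + 1) (by omega) (by omega),
      speyerG_eq_zero_of_le (n + 1) e (by omega) (by omega),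
      speyerG_eq_zero_of_le n e (by omega) (by omega)]
    ring
  -- 1 ≤ e, e + 1 ≤ n + 1
  have hd2 : 2 ≤ e + 1 := by omega
  have hdn : e + 1 ≤ n + 1 := by omega
  -- normalize LHS
  have L : speyerG (n + 2) (e + 1) t
      = ∑ i ∈ Finset.Icc 1 (e + 1),
          ((n + 1 - i).choose (e + 1 - i) : ℝ) * ((n - e).choose (i - 1)) * t ^ i := by
    unfold speyerG
    apply Finset.sum_congr rfl
    intro i _
    rw [show n + 2 - i - 1 = n + 1 - i by omega, show n + 2 - (e + 1) - 1 = n - e by omega]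
  rw [L]
  -- expand pointwise with key lemma
  have step : ∀ i ∈ Finset.Icc 1 (e + 1),
      ((n + 1 - i).choose (e + 1 - i) : ℝ) * ((n - e).choose (i - 1)) * t ^ i
        = ((n - i).choose (e + 1 - i) : ℝ) * ((n - (e + 1)).choose (i - 1)) * t ^ i
          + (if i ≤ e then ((n - i).choose (e - i) : ℝ) * ((n - e).choose (i - 1)) * t ^ i else 0)
          + (if 2 ≤ i then ((n - i).choose (e + 1 - i) : ℝ) * ((n - (e + 1)).choose (i - 2)) * t ^ i else 0) := by
    intro i hi
    simp only [Finset.mem_Icc] at hi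
    have hk := key n (e + 1) i hn hd2 hdn hi.1 hi.2
    rw [show e + 1 - 1 = e by omega, show n + 1 - (e + 1) = n - e by omega] at hk
    split_ifs with h1 h2 h2
    · rw [if_pos h1, if_pos h2] at hk
      have hk' := congrArg (fun m : ℕ => (m : ℝ)) hk
      push_cast at hk'
      linear_combination t ^ i * hk'
    · rw [if_pos h1, if_neg h2] at hk
      have hk' := congrArg (fun m : ℕ => (m : ℝ)) hk
      push_cast at hk'
      linear_combination t ^ i * hk'
    · rw [if_neg h1, if_pos h2] at hk
      have hk' := congrArg (fun m : ℕ => (m : ℝ)) hk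
      push_cast at hk'
      linear_combination t ^ i * hk'
    · omega
  rw [Finset.sum_congr rfl step]
  rw [Finset.sum_add_distrib, Finset.sum_add_distrib]
  congr 1
  · congr 1
    · -- first sum is speyerG (n+1) (e+1)
      unfold speyerG
      apply Finset.sum_congr rfl
      intro i _
      rw [show n + 1 - i - 1 = n - i by omega,
        show n + 1 - (e + 1) - 1 = n - (e + 1) by omega]
    · -- second sum is speyerG (n+1) e
      rw [← Finset.sum_filter]
      have hf : (Finset.Icc 1 (e + 1)).filter (· ≤ e) = Finset.Icc 1 e := by
        ext x
        simp only [Finset.mem_filter, Finset.mem_Icc]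
        omega
      rw [hf]
      unfold speyerG
      apply Finset.sum_congr rfl
      intro i _
      rw [show n + 1 - i - 1 = n - i by omega,
        show n + 1 - e - 1 = n - e by omega]
  · -- third sum is t * speyerG n e
    rw [← Finset.sum_filter]
    have hf : (Finset.Icc 1 (e + 1)).filter (2 ≤ ·) = Finset.Icc 2 (e + 1) := by
      ext x
      simp only [Finset.mem_filter, Finset.mem_Icc]
      omega
    rw [hf]
    have hmap : Finset.Icc 2 (e + 1) = (Finset.Icc 1 e).map (addRightEmbedding 1) := by
      rw [Finset.map_add_right_Icc]
    rw [hmap, Finset.sum_map]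
    unfold speyerG
    rw [Finset.mul_sum]
    apply Finset.sum_congr rfl
    intro i hi
    simp only [Finset.mem_Icc] at hi
    simp only [addRightEmbedding_apply]
    rw [show n - (i + 1) = n - i - 1 by omega, show e + 1 - (i + 1) = e - i by omega,
      show n - (e + 1) = n - e - 1 by omega, show i + 1 - 2 = i - 1 by omega]
    ring

lemma hPoly_eq_range (m N : ℕ) (hm : 2 ≤ m) (hN : m ≤ N) (t : ℝ) :
    hPoly m t = ∑ d ∈ Finset.range N, Polynomial.C (speyerG m d t) * Polynomial.X ^ d := by
  unfold hPoly
  apply Finset.sum_subset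
  · intro x hx
    simp only [Finset.mem_Icc] at hx
    simp only [Finset.mem_range]
    omega
  · intro x hx hx'
    simp only [Finset.mem_Icc, not_and, not_le] at hx'
    simp only [Finset.mem_range] at hx
    rcases Nat.eq_zero_or_pos x with rfl | hxpos
    · rw [speyerG_zero]; simp
    · have hmx : m ≤ x := by
        have := hx' hxpos
        omega
      rw [speyerG_eq_zero_of_le m x hm hmx]
      simp

theorem hPoly_rec (n : ℕ) (hn : 2 ≤ n) (t : ℝ) :
    hPoly (n + 2) t = (1 + Polynomial.X) * hPoly (n + 1) t
      + Polynomial.C t * Polynomial.X * hPoly n t := by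
  rw [hPoly_eq_range (n + 2) (n + 2) (by omega) le_rfl t,
    hPoly_eq_range (n + 1) (n + 1) (by omega) le_rfl t,
    hPoly_eq_range n (n + 1) hn (by omega) t]
  rw [Finset.sum_range_succ' _ (n + 1)]
  rw [speyerG_zero]
  simp only [map_zero, zero_mul, add_zero, pow_zero, mul_one]
  have step : ∀ e ∈ Finset.range (n + 1),
      Polynomial.C (speyerG (n + 2) (e + 1) t) * Polynomial.X ^ (e + 1)
        = Polynomial.C (speyerG (n + 1) (e + 1) t) * Polynomial.X ^ (e + 1)
          + Polynomial.X * (Polynomial.C (speyerG (n + 1) e t) * Polynomial.X ^ e)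
          + Polynomial.C t * Polynomial.X * (Polynomial.C (speyerG n e t) * Polynomial.X ^ e) := by
    intro e _
    rw [speyerG_rec n e hn t]
    simp only [map_add, map_mul]
    ring
  rw [Finset.sum_congr rfl step]
  rw [Finset.sum_add_distrib, Finset.sum_add_distrib]
  rw [← Finset.mul_sum, ← Finset.mul_sum]
  have h1 : ∑ e ∈ Finset.range (n + 1),
      Polynomial.C (speyerG (n + 1) (e + 1) t) * Polynomial.X ^ (e + 1)
        = ∑ d ∈ Finset.range (n + 1), Polynomial.C (speyerG (n + 1) d t) * Polynomial.X ^ d := by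
    rw [Finset.sum_range_succ' (fun d => Polynomial.C (speyerG (n + 1) d t) * Polynomial.X ^ d) n]
    rw [speyerG_zero]
    simp only [map_zero, zero_mul, add_zero, pow_zero, mul_one]
    rw [Finset.sum_range_succ _ n]
    rw [speyerG_eq_zero_of_le (n + 1) (n + 1) (by omega) le_rfl]
    simp
  rw [h1]
  ring
end

section
/- For every real t > 0 and every integer n ≥ 4, the finite sequence (g_{n,1}(t), g_{n,2}(t), ..., g_{n,n-1}(t)) is log-concave: g_{n,d}(t)² ≥ g_{n,d-1}(t)·g_{n,d+1}(t) for 2 ≤ d ≤ n-2. -/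
open Polynomial Finset

/-- zero-extended antidiagonal function, `T t n d = speyerG n d t` for `1 ≤ d ≤ n-1`. -/
noncomputable def Tg (t : ℝ) (n : ℕ) (d : ℤ) : ℝ :=
  if 1 ≤ d ∧ d ≤ (n : ℤ) - 1 then speyerG n d.toNat t else 0

lemma speyerG_nonneg (n d : ℕ) {t : ℝ} (ht : 0 ≤ t) : 0 ≤ speyerG n d t := by
  apply Finset.sum_nonneg
  intro i _
  positivity

lemma speyerG_one (n : ℕ) (t : ℝ) : speyerG n 1 t = t := by
  simp [speyerG]

lemma speyerG_top (n : ℕ) (t : ℝ) : speyerG (n+2) (n+1) t = t := by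
  rw [speyerG, Finset.sum_eq_single_of_mem 1 (by simp)]
  · norm_num
  · intro i hi h1
    simp only [Finset.mem_Icc] at hi
    have : (n + 2 - (n+1) - 1) = 0 := by omega
    rw [this, Nat.choose_eq_zero_of_lt (by omega : 0 < i - 1)]
    simp

lemma speyerG_pos (n d : ℕ) {t : ℝ} (ht : 0 < t) (h1 : 1 ≤ d) (h2 : d ≤ n - 1) :
    0 < speyerG n d t := by
  have hn : 2 ≤ n := by omega
  apply Finset.sum_pos' (fun i _ => by positivity)
  refine ⟨1, by simp [h1], ?_⟩
  have hc : 0 < (n - 1 - 1).choose (d - 1) := Nat.choose_pos (by omega)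
  have hc2 : (n - d - 1).choose (1-1) = 1 := by simp
  rw [hc2]
  push_cast
  have : (0:ℝ) < (n - 1 - 1).choose (d - 1) := by exact_mod_cast hc
  nlinarith

lemma Tg_nonneg (t : ℝ) (ht : 0 ≤ t) (n : ℕ) (d : ℤ) : 0 ≤ Tg t n d := by
  unfold Tg; split_ifs
  · exact speyerG_nonneg _ _ ht
  · exact le_refl 0

lemma Tg_zero (t : ℝ) (n : ℕ) (d : ℤ) (h : d < 1 ∨ (n:ℤ) - 1 < d) : Tg t n d = 0 := by
  unfold Tg; rw [if_neg]; omega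

lemma Tg_pos (t : ℝ) (ht : 0 < t) (n : ℕ) (d : ℤ) (h1 : 1 ≤ d) (h2 : d ≤ (n:ℤ) - 1) :
    0 < Tg t n d := by
  unfold Tg; rw [if_pos ⟨h1, h2⟩]
  exact speyerG_pos n d.toNat ht (by omega) (by omega)

lemma split_bot (m : ℕ) (f : ℕ → ℝ) (hm : 1 ≤ m) :
    ∑ i ∈ Finset.Icc 1 m, f i = f 1 + ∑ i ∈ Finset.Icc 2 m, f i := by
  rw [show Finset.Icc 1 m = insert 1 (Finset.Icc 2 m) by ext x; simp; omega,
    Finset.sum_insert (by simp)]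

lemma split_top (m : ℕ) (f : ℕ → ℝ) (hm : 2 ≤ m) :
    ∑ i ∈ Finset.Icc 2 m, f i = (∑ i ∈ Finset.Icc 2 (m-1), f i) + f m := by
  rw [show Finset.Icc 2 m = insert m (Finset.Icc 2 (m-1)) by ext x; simp; omega,
    Finset.sum_insert (by simp; omega)]
  ring

lemma pascal2 (A B C E : ℕ) :
    (A+1).choose (B+1) * (C+1).choose (E+1)
      = A.choose B * (C+1).choose (E+1) + A.choose (B+1) * C.choose (E+1)
        + A.choose (B+1) * C.choose E := by
  rw [Nat.choose_succ_succ A B, Nat.choose_succ_succ C E]; ring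

lemma rec_main (t : ℝ) (n d : ℕ) (h2 : 2 ≤ d) (hd : d ≤ n) :
    speyerG (n+2) d t
      = speyerG (n+1) (d-1) t + speyerG (n+1) d t + t * speyerG n (d-1) t := by
  unfold speyerG
  -- rewrite third sum
  have hK : t * ∑ i ∈ Finset.Icc 1 (d-1),
      ((n - i - 1).choose (d-1 - i) : ℝ) * ((n - (d-1) - 1).choose (i - 1) : ℝ) * t ^ i
      = ∑ i ∈ Finset.Icc 2 d,
      ((n - (i-1) - 1).choose (d-1 - (i-1)) : ℝ) * ((n - (d-1) - 1).choose ((i-1) - 1) : ℝ) * t ^ i := by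
    rw [Finset.mul_sum]
    rw [show Finset.Icc 2 d = Finset.map (addRightEmbedding 1) (Finset.Icc 1 (d-1)) by
        rw [Finset.map_add_right_Icc]; congr 1; omega,
      Finset.sum_map]
    apply Finset.sum_congr rfl
    intro i hi
    simp only [Finset.mem_Icc] at hi
    simp only [addRightEmbedding_apply]
    rw [show i + 1 - 1 = i from by omega]
    ring
  rw [hK]
  rw [split_bot d _ (by omega), split_bot (d-1) _ (by omega), split_bot d _ (by omega),
    split_top d _ h2, split_top d _ h2, split_top d _ h2,
    show Finset.Icc 2 (d-1) = Finset.Icc 2 (d-1) from rfl]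
  have E1 : ((n+2 - 1 - 1).choose (d - 1) : ℝ) * ((n+2 - d - 1).choose (1 - 1) : ℝ) * t ^ 1
      = ((n+1 - 1 - 1).choose (d-1 - 1) : ℝ) * ((n+1 - (d-1) - 1).choose (1 - 1) : ℝ) * t ^ 1
        + ((n+1 - 1 - 1).choose (d - 1) : ℝ) * ((n+1 - d - 1).choose (1 - 1) : ℝ) * t ^ 1 := by
    obtain ⟨e, rfl⟩ : ∃ e, d = e + 2 := ⟨d - 2, by omega⟩
    obtain ⟨r, rfl⟩ : ∃ r, n = e + 2 + r := ⟨n - (e+2), by omega⟩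
    rw [show e+2+r+1-(e+2-1)-1 = r+1 from by omega,
        show e+2-1-1 = e from by omega,
        show e+2+r+2-1-1 = (e+r+1)+1 from by omega,
        show e+2+r+1-1-1 = e+r+1 from by omega,
        show e+2+r+2-(e+2)-1 = r+1 from by omega,
        show e+2+r+1-(e+2)-1 = r from by omega,
        show e+2-1 = e+1 from by omega,
        Nat.choose_succ_succ (e+r+1) e]
    simp
    push_cast
    ring
  have E2 : ((n+2 - d - 1).choose (d - d) : ℝ) * ((n+2 - d - 1).choose (d - 1) : ℝ) * t ^ d
      = ((n+1 - d - 1).choose (d - d) : ℝ) * ((n+1 - d - 1).choose (d - 1) : ℝ) * t ^ d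
        + ((n - (d-1) - 1).choose (d-1 - (d-1)) : ℝ) * ((n - (d-1) - 1).choose ((d-1) - 1) : ℝ) * t ^ d := by
    obtain ⟨e, rfl⟩ : ∃ e, d = e + 2 := ⟨d - 2, by omega⟩
    obtain ⟨r, rfl⟩ : ∃ r, n = e + 2 + r := ⟨n - (e+2), by omega⟩
    rw [show e+2+r-(e+2-1)-1 = r from by omega,
        show e+2-1-(e+2-1) = 0 from by omega,
        show e+2-1-1 = e from by omega,
        show e+2+r+2-(e+2)-1 = r+1 from by omega,
        show e+2-(e+2) = 0 from by omega,
        show e+2+r+1-(e+2)-1 = r from by omega,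
        show e+2-1 = e+1 from by omega,
        Nat.choose_succ_succ r e]
    simp
    push_cast
    ring
  have E3 : ∑ i ∈ Finset.Icc 2 (d-1),
        ((n+2 - i - 1).choose (d - i) : ℝ) * ((n+2 - d - 1).choose (i - 1) : ℝ) * t ^ i
      = ∑ i ∈ Finset.Icc 2 (d-1),
        (((n+1 - i - 1).choose (d-1 - i) : ℝ) * ((n+1 - (d-1) - 1).choose (i - 1) : ℝ) * t ^ i
        + ((n+1 - i - 1).choose (d - i) : ℝ) * ((n+1 - d - 1).choose (i - 1) : ℝ) * t ^ i
        + ((n - (i-1) - 1).choose (d-1 - (i-1)) : ℝ) * ((n - (d-1) - 1).choose ((i-1) - 1) : ℝ) * t ^ i) := by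
    apply Finset.sum_congr rfl
    intro i hi
    simp only [Finset.mem_Icc] at hi
    obtain ⟨j, rfl⟩ : ∃ j, i = j + 2 := ⟨i - 2, by omega⟩
    obtain ⟨q, rfl⟩ : ∃ q, d = j + 2 + q + 1 := ⟨d - (j+3), by omega⟩
    obtain ⟨r, rfl⟩ : ∃ r, n = j + 2 + q + 1 + r := ⟨n - (j+2+q+1), by omega⟩
    rw [show j+2+q+1+r-(j+2-1)-1 = q+r+1 from by omega,
        show j+2+q+1-1-(j+2-1) = q+1 from by omega,
        show j+2+q+1+r-(j+2+q+1-1)-1 = r from by omega,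
        show j+2-1-1 = j from by omega,
        show j+2+q+1+r+2-(j+2)-1 = (q+r+1)+1 from by omega,
        show j+2+q+1-(j+2) = q+1 from by omega,
        show j+2+q+1+r+2-(j+2+q+1)-1 = r+1 from by omega,
        show j+2+q+1+r+1-(j+2)-1 = q+r+1 from by omega,
        show j+2+q+1-1-(j+2) = q from by omega,
        show j+2+q+1+r+1-(j+2+q+1-1)-1 = r+1 from by omega,
        show j+2+q+1+r+1-(j+2+q+1)-1 = r from by omega,
        show j+2-1 = j+1 from by omega]
    rw [Nat.choose_succ_succ (q+r+1) q, Nat.choose_succ_succ r j]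
    push_cast
    ring
  rw [E3, Finset.sum_add_distrib, Finset.sum_add_distrib]
  linarith [E1, E2]


lemma Tg_rec (t : ℝ) (n : ℕ) (hn : 2 ≤ n) (d : ℤ) :
    Tg t (n+2) d = Tg t (n+1) (d-1) + Tg t (n+1) d + t * Tg t n (d-1) := by
  rcases lt_or_ge d 1 with h | h
  · rw [Tg_zero t _ _ (by omega), Tg_zero t _ _ (by omega), Tg_zero t _ _ (by omega),
      Tg_zero t _ _ (by omega)]
    ring
  rcases eq_or_lt_of_le h with h1 | h1
  · -- d = 1
    rw [← h1]
    rw [show (1:ℤ)-1 = 0 from rfl, Tg_zero t (n+1) 0 (by omega), Tg_zero t n 0 (by omega)]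
    unfold Tg
    rw [if_pos (by constructor <;> omega), if_pos (by constructor <;> omega)]
    norm_num [speyerG_one]
  rcases lt_or_ge d ((n:ℤ)+1) with h2 | h2
  · -- 2 ≤ d ≤ n : main case
    unfold Tg
    rw [if_pos (by constructor <;> omega), if_pos (by constructor <;> omega),
      if_pos (by constructor <;> omega), if_pos (by constructor <;> omega)]
    have hd2 : 2 ≤ d.toNat := by omega
    have hdn : d.toNat ≤ n := by omega
    have h3 : (d-1).toNat = d.toNat - 1 := by omega
    rw [h3]
    exact rec_main t n d.toNat hd2 hdn
  rcases eq_or_lt_of_le h2 with h3 | h3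
  · -- d = n+1
    rw [← h3]
    rw [Tg_zero t (n+1) ((n:ℤ)+1) (by omega), Tg_zero t n ((n:ℤ)+1-1) (by omega)]
    unfold Tg
    rw [if_pos (by constructor <;> push_cast <;> omega), if_pos (by constructor <;> push_cast <;> omega)]
    have e1 : ((n:ℤ)+1).toNat = n + 1 := by omega
    have e2 : ((n:ℤ)+1-1).toNat = n := by omega
    rw [e1, e2]
    obtain ⟨m, rfl⟩ : ∃ m, n = m + 1 := ⟨n - 1, by omega⟩
    rw [show m + 1 + 2 = m + 1 + 2 from rfl, speyerG_top,
      show m + 1 + 1 = m + 2 from by ring, show m + 1 = m + 1 from rfl]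
    have := speyerG_top m t
    rw [this]
    ring
  · -- d > n+1
    rw [Tg_zero t _ _ (by omega), Tg_zero t _ _ (by omega), Tg_zero t _ _ (by omega),
      Tg_zero t _ _ (by omega)]
    ring

lemma Tg2_eq (t : ℝ) (d : ℤ) : Tg t 2 d = if d = 1 then t else 0 := by
  unfold Tg
  by_cases h : d = 1
  · subst h; norm_num [speyerG_one]
  · rw [if_neg (by omega), if_neg h]

lemma Tg3_eq (t : ℝ) (d : ℤ) : Tg t 3 d = if d = 1 ∨ d = 2 then t else 0 := by
  unfold Tg
  by_cases h : d = 1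
  · subst h; norm_num [speyerG_one]
  by_cases h2 : d = 2
  · subst h2
    rw [if_pos (by constructor <;> norm_num), if_pos (by right; rfl)]
    show speyerG 3 2 t = t
    have : speyerG (1+2) (1+1) t = t := speyerG_top 1 t
    simpa using this
  · rw [if_neg (by omega), if_neg (by omega)]

section Ineqs
variable {t : ℝ}

lemma L2_of_L (ht : 0 < t) (n : ℕ)
    (hL : ∀ d : ℤ, Tg t n (d-1) * Tg t n (d+1) ≤ Tg t n d ^ 2) :
    ∀ d : ℤ, Tg t n (d-2) * Tg t n (d+1) ≤ Tg t n (d-1) * Tg t n d := by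
  intro d
  by_cases hr : (1 ≤ d-1 ∧ d-1 ≤ (n:ℤ)-1) ∧ (1 ≤ d ∧ d ≤ (n:ℤ)-1)
  · have p1 := Tg_pos t ht n (d-1) hr.1.1 hr.1.2
    have p2 := Tg_pos t ht n d hr.2.1 hr.2.2
    have h1 := hL (d-1)
    have h2 := hL d
    rw [show d-1-1 = d-2 from by ring, show d-1+1 = d from by ring] at h1
    have hh := mul_le_mul h1 h2
      (mul_nonneg (Tg_nonneg t ht.le n (d-1)) (Tg_nonneg t ht.le n (d+1)))
      (sq_nonneg (Tg t n (d-1)))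
    have key : (Tg t n (d-2) * Tg t n (d+1)) * (Tg t n (d-1) * Tg t n d)
        ≤ (Tg t n (d-1) * Tg t n d) * (Tg t n (d-1) * Tg t n d) := by nlinarith [hh]
    exact le_of_mul_le_mul_right key (mul_pos p1 p2)
  · have : d - 2 < 1 ∨ (n:ℤ)-1 < d+1 := by omega
    rcases this with h | h
    · rw [Tg_zero t n (d-2) (by omega)]
      simpa using mul_nonneg (Tg_nonneg t ht.le n (d-1)) (Tg_nonneg t ht.le n d)
    · rw [Tg_zero t n (d+1) (by omega)]
      simpa using mul_nonneg (Tg_nonneg t ht.le n (d-1)) (Tg_nonneg t ht.le n d)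

lemma C1'_of (ht : 0 < t) (n : ℕ)
    (hLa : ∀ d : ℤ, Tg t n (d-1) * Tg t n (d+1) ≤ Tg t n d ^ 2)
    (hC1 : ∀ d : ℤ, Tg t (n+1) (d-1) * Tg t n d ≤ Tg t (n+1) d * Tg t n (d-1)) :
    ∀ d : ℤ, Tg t (n+1) (d-1) * Tg t n (d+1) ≤ Tg t (n+1) d * Tg t n d := by
  intro d
  by_cases hr : 1 ≤ d ∧ d ≤ (n:ℤ)-1
  · have p := Tg_pos t ht n d hr.1 hr.2
    have h1 := hC1 d
    have h2 := hLa d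
    have key : (Tg t (n+1) (d-1) * Tg t n (d+1)) * Tg t n d
        ≤ (Tg t (n+1) d * Tg t n d) * Tg t n d := by
      nlinarith [mul_le_mul_of_nonneg_right h1 (Tg_nonneg t ht.le n (d+1)),
        mul_le_mul_of_nonneg_left h2 (Tg_nonneg t ht.le (n+1) d)]
    exact le_of_mul_le_mul_right key p
  · have : d < 1 ∨ (n:ℤ)-1 < d := by omega
    rcases this with h | h
    · rw [Tg_zero t (n+1) (d-1) (by omega)]
      simpa using mul_nonneg (Tg_nonneg t ht.le (n+1) d) (Tg_nonneg t ht.le n d)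
    · rw [Tg_zero t n (d+1) (by omega)]
      simpa using mul_nonneg (Tg_nonneg t ht.le (n+1) d) (Tg_nonneg t ht.le n d)

lemma C4_of (ht : 0 < t) (n : ℕ)
    (hLa : ∀ d : ℤ, Tg t n (d-1) * Tg t n (d+1) ≤ Tg t n d ^ 2)
    (hC2 : ∀ d : ℤ, Tg t (n+1) d * Tg t n (d-2) ≤ Tg t (n+1) (d-1) * Tg t n (d-1)) :
    ∀ d : ℤ, Tg t (n+1) (d+1) * Tg t n (d-2) ≤ Tg t (n+1) d * Tg t n (d-1) := by
  intro d
  by_cases hr : 1 ≤ d-1 ∧ d-1 ≤ (n:ℤ)-1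
  · have p := Tg_pos t ht n (d-1) hr.1 hr.2
    have h1 := hC2 (d+1)
    rw [show d+1-1 = d from by ring, show d+1-2 = d-1 from by ring] at h1
    have h2 := hLa (d-1)
    rw [show d-1-1 = d-2 from by ring, show d-1+1 = d from by ring] at h2
    have key : (Tg t (n+1) (d+1) * Tg t n (d-2)) * Tg t n (d-1)
        ≤ (Tg t (n+1) d * Tg t n (d-1)) * Tg t n (d-1) := by
      nlinarith [mul_le_mul_of_nonneg_right h1 (Tg_nonneg t ht.le n (d-2)),
        mul_le_mul_of_nonneg_left h2 (Tg_nonneg t ht.le (n+1) d)]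
    exact le_of_mul_le_mul_right key p
  · have : d - 2 < 1 ∨ (n:ℤ) < d+1 := by omega
    rcases this with h | h
    · rw [Tg_zero t n (d-2) (by omega)]
      simpa using mul_nonneg (Tg_nonneg t ht.le (n+1) d) (Tg_nonneg t ht.le n (d-1))
    · rw [Tg_zero t (n+1) (d+1) (by push_cast; omega)]
      simpa using mul_nonneg (Tg_nonneg t ht.le (n+1) d) (Tg_nonneg t ht.le n (d-1))

lemma step_pack (ht : 0 < t) (n : ℕ) (hn : 2 ≤ n)
    (hLa : ∀ d : ℤ, Tg t n (d-1) * Tg t n (d+1) ≤ Tg t n d ^ 2)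
    (hLb : ∀ d : ℤ, Tg t (n+1) (d-1) * Tg t (n+1) (d+1) ≤ Tg t (n+1) d ^ 2)
    (hC1 : ∀ d : ℤ, Tg t (n+1) (d-1) * Tg t n d ≤ Tg t (n+1) d * Tg t n (d-1))
    (hC2 : ∀ d : ℤ, Tg t (n+1) d * Tg t n (d-2) ≤ Tg t (n+1) (d-1) * Tg t n (d-1)) :
    (∀ d : ℤ, Tg t (n+2) (d-1) * Tg t (n+2) (d+1) ≤ Tg t (n+2) d ^ 2) ∧
    (∀ d : ℤ, Tg t (n+2) (d-1) * Tg t (n+1) d ≤ Tg t (n+2) d * Tg t (n+1) (d-1)) ∧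
    (∀ d : ℤ, Tg t (n+2) d * Tg t (n+1) (d-2) ≤ Tg t (n+2) (d-1) * Tg t (n+1) (d-1)) := by
  have hrec : ∀ d : ℤ, Tg t (n+2) d = Tg t (n+1) (d-1) + Tg t (n+1) d + t * Tg t n (d-1) :=
    Tg_rec t n hn
  have hL2 := L2_of_L ht (n+1) hLb
  have hC1' := C1'_of ht n hLa hC1
  have hC4 := C4_of ht n hLa hC2
  refine ⟨?_, ?_, ?_⟩
  · -- log-concavity at level n+2
    intro d
    rw [hrec (d-1), hrec d, hrec (d+1),
      show d-1-1 = d-2 from by ring, show d+1-1 = d from by ring]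
    have s1 := hLb (d-1)
    rw [show d-1-1 = d-2 from by ring, show d-1+1 = d from by ring] at s1
    have s2 := hLb d
    have s3 := hL2 d
    have s4 := hLa (d-1)
    rw [show d-1-1 = d-2 from by ring, show d-1+1 = d from by ring] at s4
    have s5 := hC2 d
    have s6 := hC4 d
    have s7 := hC1' (d-1)
    rw [show d-1-1 = d-2 from by ring, show d-1+1 = d from by ring] at s7
    have s8 := hC1 d
    nlinarith [s1, s2, s3,
      mul_le_mul_of_nonneg_left s4 (sq_nonneg t),
      mul_le_mul_of_nonneg_left s5 ht.le,
      mul_le_mul_of_nonneg_left s6 ht.le,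
      mul_le_mul_of_nonneg_left s7 ht.le,
      mul_le_mul_of_nonneg_left s8 ht.le]
  · -- C1 at level (n+2, n+1)
    intro d
    rw [hrec d, hrec (d-1), show d-1-1 = d-2 from by ring]
    have s1 := hLb (d-1)
    rw [show d-1-1 = d-2 from by ring, show d-1+1 = d from by ring] at s1
    have s2 := hC2 d
    nlinarith [s1, mul_le_mul_of_nonneg_left s2 ht.le]
  · -- C2 at level (n+2, n+1)
    intro d
    rw [hrec d, hrec (d-1), show d-1-1 = d-2 from by ring]
    have s1 := hLb (d-1)
    rw [show d-1-1 = d-2 from by ring, show d-1+1 = d from by ring] at s1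
    have s2 := hC1 (d-1)
    rw [show d-1-1 = d-2 from by ring] at s2
    nlinarith [s1, mul_le_mul_of_nonneg_left s2 ht.le]

end Ineqs

section Pack
variable {t : ℝ}

lemma base_L2 (ht : 0 < t) :
    ∀ d : ℤ, Tg t 2 (d-1) * Tg t 2 (d+1) ≤ Tg t 2 d ^ 2 := by
  intro d
  simp only [Tg2_eq]
  split_ifs <;> first | omega | nlinarith [ht.le]

lemma base_L3 (ht : 0 < t) :
    ∀ d : ℤ, Tg t 3 (d-1) * Tg t 3 (d+1) ≤ Tg t 3 d ^ 2 := by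
  intro d
  simp only [Tg3_eq]
  split_ifs <;> first | omega | nlinarith [ht.le]

lemma base_C1 (ht : 0 < t) :
    ∀ d : ℤ, Tg t 3 (d-1) * Tg t 2 d ≤ Tg t 3 d * Tg t 2 (d-1) := by
  intro d
  simp only [Tg3_eq, Tg2_eq]
  split_ifs <;> first | omega | nlinarith [ht.le]

lemma base_C2 (ht : 0 < t) :
    ∀ d : ℤ, Tg t 3 d * Tg t 2 (d-2) ≤ Tg t 3 (d-1) * Tg t 2 (d-1) := by
  intro d
  simp only [Tg3_eq, Tg2_eq]
  split_ifs <;> first | omega | nlinarith [ht.le]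

lemma pack (ht : 0 < t) : ∀ n : ℕ, 2 ≤ n →
    (∀ d : ℤ, Tg t n (d-1) * Tg t n (d+1) ≤ Tg t n d ^ 2) ∧
    (∀ d : ℤ, Tg t (n+1) (d-1) * Tg t (n+1) (d+1) ≤ Tg t (n+1) d ^ 2) ∧
    (∀ d : ℤ, Tg t (n+1) (d-1) * Tg t n d ≤ Tg t (n+1) d * Tg t n (d-1)) ∧
    (∀ d : ℤ, Tg t (n+1) d * Tg t n (d-2) ≤ Tg t (n+1) (d-1) * Tg t n (d-1)) := by
  refine Nat.le_induction ?_ ?_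
  · exact ⟨base_L2 ht, base_L3 ht, base_C1 ht, base_C2 ht⟩
  · rintro n hn ⟨h1, h2, h3, h4⟩
    obtain ⟨g1, g2, g3⟩ := step_pack ht n hn h1 h2 h3 h4
    exact ⟨h2, g1, g2, g3⟩

end Pack


theorem speyerG_log_concave (t : ℝ) (ht : 0 < t) (n : ℕ) (hn : 4 ≤ n) :
    ∀ d : ℕ, 2 ≤ d → d ≤ n - 2 →
      speyerG n (d - 1) t * speyerG n (d + 1) t ≤ (speyerG n d t) ^ 2 := by
  intro d hd2 hdn
  obtain ⟨m, rfl⟩ : ∃ m, n = m + 2 := ⟨n - 2, by omega⟩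
  have hm : 2 ≤ m := by omega
  have hdm : d ≤ m := by omega
  have hL := (pack ht (m+1) (by omega)).2.1
  have h := hL (d : ℤ)
  rw [show m + 1 + 1 = m + 2 from by ring] at h
  unfold Tg at h
  rw [if_pos (by constructor <;> push_cast <;> omega),
    if_pos (by constructor <;> push_cast <;> omega),
    if_pos (by constructor <;> push_cast <;> omega)] at h
  rw [show ((d:ℤ)-1).toNat = d - 1 from by omega,
    show ((d:ℤ)+1).toNat = d + 1 from by omega,
    show ((d:ℤ)).toNat = d from by omega] at h
  exact h
end

section
/- For n ≥ 4, the sequence (g_{n,d}(1))_{d=1}^{n-1} is log-concave, where g_{n,d}(1) = ∑_{i=1}^{d} C(n-i-1, d-i)·C(n-d-1, i-1). -/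
open Finset

/-- `g_{n,d}(1)`, the Speyer g-polynomial of `U_{n,d}` evaluated at `t = 1`. -/
def speyerGOne (n d : ℕ) : ℕ :=
  ∑ i ∈ Finset.Icc 1 d, (n - i - 1).choose (d - i) * (n - d - 1).choose (i - 1)

/-- Delannoy numbers. -/
def Del : ℕ → ℕ → ℕ
  | 0, _ => 1
  | _+1, 0 => 1
  | a+1, b+1 => Del a (b+1) + Del (a+1) b + Del a b

lemma Del_zero_left (b : ℕ) : Del 0 b = 1 := by cases b <;> simp [Del]

lemma Del_zero_right (a : ℕ) : Del a 0 = 1 := by cases a <;> simp [Del]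

lemma Del_succ_succ (a b : ℕ) :
    Del (a+1) (b+1) = Del a (b+1) + Del (a+1) b + Del a b := by
  rw [Del]

lemma Del_pos (a b : ℕ) : 0 < Del a b := by
  match a, b with
  | 0, b => rw [Del_zero_left]; omega
  | a+1, 0 => rw [Del_zero_right]; omega
  | a+1, b+1 =>
    have := Del_pos a (b+1)
    rw [Del_succ_succ]; omega
termination_by (a, b)

lemma Del_symm (a b : ℕ) : Del a b = Del b a := by
  match a, b with
  | 0, b => rw [Del_zero_left, Del_zero_right]
  | a+1, 0 => rw [Del_zero_left, Del_zero_right]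
  | a+1, b+1 =>
    rw [Del_succ_succ, Del_succ_succ, Del_symm a (b+1), Del_symm (a+1) b,
      Del_symm a b]
    ring
termination_by (a, b)

lemma Del_mono_left (a b : ℕ) : Del a b ≤ Del (a+1) b := by
  cases b with
  | zero => rw [Del_zero_right, Del_zero_right]
  | succ v =>
    cases a with
    | zero =>
      rw [Del_zero_left, Del_succ_succ]
      have := Del_pos 0 (v+1)
      omega
    | succ u =>
      rw [Del_succ_succ (u+1) v]
      omega

lemma Del_mono_right (a b : ℕ) : Del a b ≤ Del a (b+1) := by
  rw [Del_symm a b, Del_symm a (b+1)]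
  exact Del_mono_left b a

/-- The key mutual induction: STAR', PSI', I1' hold for all `x y`. -/
lemma Del_key (n : ℕ) : ∀ x y : ℕ, x + y ≤ n →
    (Del x (y+1) * Del (x+1) (y+1) ≥ Del x (y+2) * Del (x+1) y) ∧
    (Del (x+1) y * Del (x+1) (y+1) ≥ Del x (y+1) * Del (x+2) y) ∧
    (Del (x+1) (y+1) * Del (x+1) (y+1) ≥ Del x (y+2) * Del (x+2) y) := by
  induction n with
  | zero =>
    intro x y h
    have hx : x = 0 := by omega
    have hy : y = 0 := by omega
    subst hx; subst hy
    refine ⟨?_, ?_, ?_⟩ <;> simp [Del_succ_succ, Del_zero_left, Del_zero_right]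
  | succ n ih =>
    -- helper: STAR' at level ≤ n+1
    have hstar : ∀ u v : ℕ, u + v ≤ n + 1 →
        Del u (v+1) * Del (u+1) (v+1) ≥ Del u (v+2) * Del (u+1) v := by
      intro u v huv
      cases u with
      | zero =>
        rw [Del_zero_left, Del_zero_left, one_mul, one_mul]
        exact Del_mono_right 1 v
      | succ u =>
        have h' : u + v ≤ n := by omega
        obtain ⟨-, hPSI, hI1⟩ := ih u v h'
        -- goal : Del (u+1) (v+1) * Del (u+2) (v+1) ≥ Del (u+1) (v+2) * Del (u+2) v
        rw [Del_succ_succ (u+1) v, Del_succ_succ u (v+1)]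
        -- A*(A+B+C) ≥ (E+A+F)*B with
        -- A = Del (u+1)(v+1), B = Del (u+2) v, C = Del (u+1) v,
        -- E = Del u (v+2), F = Del u (v+1)
        -- hI1 : A*A ≥ E*B ; hPSI : C*A ≥ F*B
        nlinarith [hI1, hPSI]
    -- helper: PSI' at level ≤ n+1
    have hpsi : ∀ u v : ℕ, u + v ≤ n + 1 →
        Del (u+1) v * Del (u+1) (v+1) ≥ Del u (v+1) * Del (u+2) v := by
      intro u v huv
      cases v with
      | zero =>
        rw [Del_zero_right, Del_zero_right, one_mul, mul_one]
        exact Del_mono_left u 1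
      | succ v =>
        have h' : u + v ≤ n := by omega
        obtain ⟨hSTAR, -, hI1⟩ := ih u v h'
        -- goal : Del (u+1) (v+1) * Del (u+1) (v+2) ≥ Del u (v+2) * Del (u+2) (v+1)
        rw [Del_succ_succ u (v+1), Del_succ_succ (u+1) v]
        -- P*(Q+P+R) ≥ Q*(P+S+T) with
        -- P = Del (u+1)(v+1), Q = Del u (v+2), R = Del u (v+1),
        -- S = Del (u+2) v, T = Del (u+1) v
        -- hI1 : P*P ≥ Q*S ; hSTAR : R*P ≥ Q*T
        nlinarith [hI1, hSTAR]
    intro x y hxy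
    refine ⟨hstar x y hxy, hpsi x y hxy, ?_⟩
    -- I1' from PSI' at (x,y) and (y,x)
    have h1 := hpsi x y hxy
    have h2 := hpsi y x (by omega)
    rw [Del_symm (y+1) x, Del_symm (y+1) (x+1), Del_symm y (x+1),
      Del_symm (y+2) x] at h2
    -- h1 : Del (x+1) y * Del (x+1) (y+1) ≥ Del x (y+1) * Del (x+2) y
    -- h2 : Del x (y+1) * Del (x+1) (y+1) ≥ Del (x+1) y * Del x (y+2)
    have hK : 0 < Del x (y+1) * Del (x+1) y :=
      Nat.mul_pos (Del_pos _ _) (Del_pos _ _)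
    refine Nat.le_of_mul_le_mul_left ?_ hK
    calc (Del x (y+1) * Del (x+1) y) * (Del x (y+2) * Del (x+2) y)
        = (Del x (y+1) * Del (x+2) y) * (Del (x+1) y * Del x (y+2)) := by ring
      _ ≤ (Del (x+1) y * Del (x+1) (y+1)) * (Del x (y+1) * Del (x+1) (y+1)) :=
          Nat.mul_le_mul h1 h2
      _ = (Del x (y+1) * Del (x+1) y) * (Del (x+1) (y+1) * Del (x+1) (y+1)) := by
          ring

/-- The binomial-sum form of the Delannoy numbers. -/
def DelS (a b : ℕ) : ℕ := ∑ j ∈ range (a+1), (b+j).choose j * b.choose (a-j)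

lemma DelS_zero_left (b : ℕ) : DelS 0 b = 1 := by simp [DelS]

lemma DelS_zero_right (a : ℕ) : DelS a 0 = 1 := by
  rw [DelS, Finset.sum_eq_single a]
  · simp
  · intro j hj hne
    have hj' : j < a + 1 := mem_range.mp hj
    have : a - j ≠ 0 := by omega
    obtain ⟨m, hm⟩ := Nat.exists_eq_succ_of_ne_zero this
    rw [hm, Nat.choose_zero_succ, mul_zero]
  · intro h
    exact absurd (mem_range.mpr (by omega)) h

lemma DelS_rec (a b : ℕ) :
    DelS (a+1) (b+1) = DelS a (b+1) + DelS (a+1) b + DelS a b := by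
  have peel1 : DelS (a+1) (b+1)
      = DelS a (b+1)
        + (∑ j ∈ range (a+1), (b+1+j).choose (j+1) * (b+1).choose (a-j))
        + (b+1).choose (a+1) := by
    rw [DelS, Finset.sum_range_succ']
    have hterm : ∀ j, (b+1+(j+1)).choose (j+1) * (b+1).choose (a+1-(j+1))
        = (b+1+j).choose j * (b+1).choose (a-j)
          + (b+1+j).choose (j+1) * (b+1).choose (a-j) := by
      intro j
      have h1 : b+1+(j+1) = (b+1+j)+1 := by omega
      have h2 : a+1-(j+1) = a-j := by omega
      rw [h1, h2, Nat.choose_succ_succ', add_mul]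
    rw [Finset.sum_congr rfl (fun j _ => hterm j), Finset.sum_add_distrib]
    have h0 : (b+1+0).choose 0 * (b+1).choose (a+1-0) = (b+1).choose (a+1) := by
      simp
    rw [h0, DelS]
  have peelW : (∑ j ∈ range (a+1), (b+1+j).choose (j+1) * (b+1).choose (a-j))
      = (∑ j ∈ range a, (b+1+j).choose (j+1) * b.choose (a-j))
        + (∑ j ∈ range a, (b+1+j).choose (j+1) * b.choose (a-1-j))
        + (a+b+1).choose (a+1) := by
    rw [Finset.sum_range_succ]
    have hlast : (b+1+a).choose (a+1) * (b+1).choose (a-a) = (a+b+1).choose (a+1) := by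
      have : b+1+a = a+b+1 := by omega
      rw [this, Nat.sub_self, Nat.choose_zero_right, mul_one]
    rw [hlast]
    congr 1
    have hterm : ∀ j ∈ range a, (b+1+j).choose (j+1) * (b+1).choose (a-j)
        = (b+1+j).choose (j+1) * b.choose (a-j)
          + (b+1+j).choose (j+1) * b.choose (a-1-j) := by
      intro j hj
      have hj' : j < a := mem_range.mp hj
      have h2 : a - j = (a-1-j) + 1 := by omega
      rw [h2, Nat.choose_succ_succ', mul_add]
      have h3 : a - 1 - j + 1 = a - j := by omega
      rw [h3]
      ring
    rw [Finset.sum_congr rfl hterm, Finset.sum_add_distrib]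
  have peel2 : DelS (a+1) b
      = b.choose (a+1) + ((∑ j ∈ range a, (b+1+j).choose (j+1) * b.choose (a-j))
          + (a+b+1).choose (a+1)) := by
    rw [DelS, Finset.sum_range_succ', Finset.sum_range_succ]
    have h0 : (b+0).choose 0 * b.choose (a+1-0) = b.choose (a+1) := by simp
    have hl : (b+(a+1)).choose (a+1) * b.choose (a+1-(a+1))
        = (a+b+1).choose (a+1) := by
      have h1 : b+(a+1) = a+b+1 := by omega
      rw [h1, Nat.sub_self, Nat.choose_zero_right, mul_one]
    rw [h0, hl]
    have hterm : ∀ j ∈ range a, (b+(j+1)).choose (j+1) * b.choose (a+1-(j+1))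
        = (b+1+j).choose (j+1) * b.choose (a-j) := by
      intro j hj
      have h1 : b+(j+1) = b+1+j := by omega
      have h2 : a+1-(j+1) = a-j := by omega
      rw [h1, h2]
    rw [Finset.sum_congr rfl hterm]
    ring
  have peel3 : DelS a b
      = b.choose a + (∑ j ∈ range a, (b+1+j).choose (j+1) * b.choose (a-1-j)) := by
    rw [DelS, Finset.sum_range_succ']
    have h0 : (b+0).choose 0 * b.choose (a-0) = b.choose a := by simp
    rw [h0]
    have hterm : ∀ j ∈ range a, (b+(j+1)).choose (j+1) * b.choose (a-(j+1))
        = (b+1+j).choose (j+1) * b.choose (a-1-j) := by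
      intro j hj
      have h1 : b+(j+1) = b+1+j := by omega
      have h2 : a-(j+1) = a-1-j := by omega
      rw [h1, h2]
    rw [Finset.sum_congr rfl hterm]
    ring
  have pascal : (b+1).choose (a+1) = b.choose a + b.choose (a+1) :=
    Nat.choose_succ_succ' b a
  rw [peel1, peelW, peel2, peel3, pascal]
  ring

lemma DelS_eq_Del (a b : ℕ) : DelS a b = Del a b := by
  match a, b with
  | 0, b => rw [DelS_zero_left, Del_zero_left]
  | a+1, 0 => rw [DelS_zero_right, Del_zero_right]
  | a+1, b+1 =>
    rw [DelS_rec, Del_succ_succ, DelS_eq_Del a (b+1), DelS_eq_Del (a+1) b,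
      DelS_eq_Del a b]
termination_by (a, b)

lemma speyerGOne_eq_Del (a b : ℕ) : speyerGOne (a+b+2) (a+1) = Del a b := by
  rw [← DelS_eq_Del, speyerGOne]
  have hIcc : Finset.Icc 1 (a+1) = Finset.Ico 1 (a+2) := by
    ext i; simp [Nat.lt_succ_iff]
  rw [hIcc, Finset.sum_Ico_eq_sum_range]
  have hrange : a + 2 - 1 = a + 1 := by omega
  rw [hrange]
  have hsub : a+b+2 - (a+1) - 1 = b := by omega
  have hterm : ∀ j ∈ range (a+1),
      (a+b+2 - (1+j) - 1).choose ((a+1) - (1+j)) * (a+b+2-(a+1)-1).choose ((1+j)-1)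
      = (fun j => (b+j).choose j * b.choose (a-j)) (a - j) := by
    intro j hj
    have hj' : j < a + 1 := mem_range.mp hj
    have h1 : a+b+2 - (1+j) - 1 = b + (a - j) := by omega
    have h2 : (a+1) - (1+j) = a - j := by omega
    have h3 : (1+j) - 1 = j := by omega
    have h4 : a - (a - j) = j := by omega
    simp only [h1, h2, h3, hsub, h4]
  rw [Finset.sum_congr rfl hterm]
  rw [DelS]
  have := Finset.sum_range_reflect (fun j => (b+j).choose j * b.choose (a-j)) (a+1)
  rw [← this]
  apply Finset.sum_congr rfl
  intro j hj
  have hj' : j < a + 1 := mem_range.mp hj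
  have : a + 1 - 1 - j = a - j := by omega
  rw [this]

theorem speyerGOne_log_concave (n : ℕ) (hn : 4 ≤ n) :
    ∀ d : ℕ, 2 ≤ d → d ≤ n - 2 →
      speyerGOne n (d - 1) * speyerGOne n (d + 1) ≤ (speyerGOne n d) ^ 2 := by
  intro d h2 hd2
  have hdn : d + 2 ≤ n := by omega
  set x := d - 2 with hx
  set y := n - d - 2 with hy
  have e1 : speyerGOne n (d-1) = Del x (y+2) := by
    have h := speyerGOne_eq_Del x (y+2)
    rw [show x + (y+2) + 2 = n by omega, show x + 1 = d - 1 by omega] at h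
    exact h
  have e2 : speyerGOne n (d+1) = Del (x+2) y := by
    have h := speyerGOne_eq_Del (x+2) y
    rw [show (x+2) + y + 2 = n by omega, show (x+2) + 1 = d + 1 by omega] at h
    exact h
  have e3 : speyerGOne n d = Del (x+1) (y+1) := by
    have h := speyerGOne_eq_Del (x+1) (y+1)
    rw [show (x+1) + (y+1) + 2 = n by omega, show (x+1) + 1 = d by omega] at h
    exact h
  rw [e1, e2, e3, pow_two]
  obtain ⟨-, -, hI1⟩ := Del_key (x+y) x y le_rfl
  exact hI1
end

section
/- For every real t and every n ≥ 2, the polynomial h_n(x;t) is palindromic of darga n: writing h_n(x;t) = ∑_{d=1}^{n-1} g_{n,d}(t) x^d, we have g_{n,1+k}(t) = g_{n,n-1-k}(t) for all 0 ≤ k ≤ n-2; equivalently x^n · h_n(1/x; t) = h_n(x;t). -/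
open Polynomial Finset

lemma speyerG_term_symm (n d i : ℕ) (hi1 : 1 ≤ i) (hid : i ≤ d) (hind : i ≤ n - d)
    (hd1 : 1 ≤ d) (hdn : d ≤ n - 1) (hn : 2 ≤ n) :
    (n - i - 1).choose (d - i) * (n - d - 1).choose (i - 1)
      = (n - i - 1).choose (n - d - i) * (n - (n - d) - 1).choose (i - 1) := by
  have hdn' : d ≤ n := le_trans hdn (Nat.sub_le n 1)
  have h1 : n - (n - d) - 1 = d - 1 := by omega
  rw [h1]
  -- rewrite first factors via symmetry
  have h2 : (n - i - 1).choose (d - i) = (n - i - 1).choose (n - d - 1) := by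
    have : n - i - 1 - (d - i) = n - d - 1 := by omega
    rw [← this, Nat.choose_symm (by omega)]
  have h3 : (n - i - 1).choose (n - d - i) = (n - i - 1).choose (d - 1) := by
    have : n - i - 1 - (n - d - i) = d - 1 := by omega
    rw [← this, Nat.choose_symm (by omega)]
  rw [h2, h3]
  rw [Nat.choose_mul (n := n - i - 1) (k := n - d - 1) (s := i - 1) (by omega)]
  rw [Nat.choose_mul (n := n - i - 1) (k := d - 1) (s := i - 1) (by omega)]
  congr 1
  have e1 : n - i - 1 - (i - 1) = n - 2 * i + 1 - 1 := by omega
  have e2 : n - d - 1 - (i - 1) = n - d - i := by omega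
  have e3 : d - 1 - (i - 1) = d - i := by omega
  rw [e1, e2, e3]
  have : n - 2 * i + 1 - 1 - (n - d - i) = d - i := by omega
  rw [← this, Nat.choose_symm (by omega)]

lemma speyerG_symm (t : ℝ) (n d : ℕ) (hd1 : 1 ≤ d) (hdn : d ≤ n - 1) (hn : 2 ≤ n) :
    speyerG n d t = speyerG n (n - d) t := by
  have hdn' : d ≤ n := le_trans hdn (Nat.sub_le n 1)
  unfold speyerG
  rw [← Finset.sum_subset (Finset.Icc_subset_Icc le_rfl (min_le_left d (n - d)))
      (fun i hi hni => ?_),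
    ← Finset.sum_subset (s₁ := Finset.Icc 1 (min d (n - d)))
      (Finset.Icc_subset_Icc le_rfl (min_le_right d (n - d))) (fun i hi hni => ?_)]
  · apply Finset.sum_congr rfl
    intro i hi
    simp only [Finset.mem_Icc, le_min_iff] at hi
    rw [← Nat.cast_mul, ← Nat.cast_mul, speyerG_term_symm n d i hi.1 hi.2.1 hi.2.2 hd1 hdn hn]
  · simp only [Finset.mem_Icc, le_min_iff, not_and, not_le] at hi hni
    have h : n - (n - d) - 1 < i - 1 := by omega
    rw [Nat.choose_eq_zero_of_lt h]
    ring
  · simp only [Finset.mem_Icc, le_min_iff, not_and, not_le] at hi hni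
    have h : n - d - 1 < i - 1 := by omega
    rw [Nat.choose_eq_zero_of_lt h]
    ring

theorem hPoly_palindromic (t : ℝ) (n : ℕ) (hn : 2 ≤ n) :
    ∀ k : ℕ, k ≤ n - 2 → speyerG n (1 + k) t = speyerG n (n - 1 - k) t := by
  intro k hk
  have h1 : n - 1 - k = n - (1 + k) := by omega
  rw [h1]
  exact speyerG_symm t n (1 + k) (by omega) (by omega) hn
end

section
/- For every n ≥ 2 there exist coefficients γ_{n,i} (functions of t) such that h_n(x;t) = ∑_{i=0}^{⌊n/2⌋} γ_{n,i} x^i (1+x)^{n-2i}, where the γ_{n,i} satisfy γ_{n,i} = γ_{n-1,i} + t·γ_{n-2,i-1} for n ≥ 4, with initial conditions γ_{2,0} = γ_{3,0} = 0, γ_{2,1} = γ_{3,1} = t, and conventions γ_{n,-1} = γ_{n,⌊n/2⌋+1} = 0. -/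
open Polynomial Finset

noncomputable def Faux (t : ℝ) (m e : ℕ) : ℝ :=
  ∑ j ∈ Finset.range (e+1), ((m-j).choose (e-j) * (m-e).choose j : ℕ) * t ^ j

lemma F_zero (t : ℝ) (m : ℕ) : Faux t m 0 = 1 := by
  simp [Faux]

lemma F_diag (t : ℝ) (m : ℕ) : Faux t m m = 1 := by
  rw [Faux, Finset.sum_eq_single 0]
  · simp
  · intro j hj hne
    simp only [Nat.sub_self, Nat.cast_mul, mul_eq_zero]
    exact Or.inl (Or.inr (by exact_mod_cast congrArg Nat.cast (Nat.choose_eq_zero_of_lt (by omega))))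
  · simp

lemma F_top (t : ℝ) (m : ℕ) : Faux t m (m+1) = 0 := by
  rw [Faux]
  apply Finset.sum_eq_zero
  intro j hj
  rcases Nat.eq_zero_or_pos j with h | h
  · subst h
    have : m.choose (m+1) = 0 := Nat.choose_eq_zero_of_lt (by omega)
    simp [this]
  · have h2 : m - (m+1) = 0 := by omega
    rw [h2]
    have : Nat.choose 0 j = 0 := Nat.choose_eq_zero_of_lt (by omega)
    simp [this]

lemma F_sub1 (t : ℝ) (m f : ℕ) (hf : f ≤ m + 1) :
    Faux t (m+2) (f+1) =
      (∑ j ∈ Finset.range ((f+1)+1), ((m+1-j).choose (f+1-j) * (m+1-f).choose j : ℕ) * t^j)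
      + Faux t (m+1) f := by
  rw [Faux, Faux]
  have h1 : m + 2 - (f+1) = m + 1 - f := by omega
  rw [h1]
  rw [Finset.sum_range_succ, Finset.sum_range_succ
    (fun j => (((m+1-j).choose (f+1-j) * (m+1-f).choose j : ℕ) : ℝ) * t^j) (f+1)]
  have htop : ((m+2-(f+1)).choose (f+1-(f+1)) * (m+1-f).choose (f+1) : ℕ) * t^(f+1)
      = ((m+1-(f+1)).choose (f+1-(f+1)) * (m+1-f).choose (f+1) : ℕ) * t^(f+1) := by
    have : f+1-(f+1) = 0 := by omega
    rw [this]
    simp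
  rw [htop]
  have hmain : ∀ j ∈ Finset.range (f+1),
      (((m+2-j).choose (f+1-j) * (m+1-f).choose j : ℕ) : ℝ) * t^j
      = ((m+1-j).choose (f+1-j) * (m+1-f).choose j : ℕ) * t^j
        + ((m+1-j).choose (f-j) * (m+1-f).choose j : ℕ) * t^j := by
    intro j hj
    simp only [Finset.mem_range] at hj
    have e1 : m + 2 - j = (m+1-j) + 1 := by omega
    have e2 : f + 1 - j = (f-j) + 1 := by omega
    rw [e1, e2, Nat.choose_succ_succ]
    have e3 : f + 1 - j = (f-j) + 1 := by omega
    push_cast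
    ring
  rw [Finset.sum_congr rfl hmain, Finset.sum_add_distrib]
  ring

lemma F_sub2 (t : ℝ) (m f : ℕ) (hf : f ≤ m) :
    (∑ j ∈ Finset.range ((f+1)+1), ((m+1-j).choose (f+1-j) * (m+1-f).choose j : ℕ) * t^j : ℝ)
      = Faux t (m+1) (f+1) + t * Faux t m f := by
  rw [Faux, Faux, Finset.mul_sum]
  have h1 : m + 1 - (f+1) = m - f := by omega
  rw [h1]
  rw [Finset.sum_range_succ', Finset.sum_range_succ'
    (fun j => (((m+1-j).choose (f+1-j) * (m-f).choose j : ℕ) : ℝ) * t^j) (f+1)]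
  have h0 : ((m+1-0).choose (f+1-0) * (m+1-f).choose 0 : ℕ) * t^(0:ℕ)
      = (((m+1-0).choose (f+1-0) * (m-f).choose 0 : ℕ) : ℝ) * t^(0:ℕ) := by simp
  rw [h0]
  have hmain : ∀ j ∈ Finset.range (f+1),
      (((m+1-(j+1)).choose (f+1-(j+1)) * (m+1-f).choose (j+1) : ℕ) : ℝ) * t^(j+1)
      = ((m+1-(j+1)).choose (f+1-(j+1)) * (m-f).choose (j+1) : ℕ) * t^(j+1)
        + t * (((m-j).choose (f-j) * (m-f).choose j : ℕ) * t^j) := by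
    intro j hj
    simp only [Finset.mem_range] at hj
    have e1 : m + 1 - (j+1) = m - j := by omega
    have e2 : f + 1 - (j+1) = f - j := by omega
    have e3 : m + 1 - f = (m - f) + 1 := by omega
    rw [e1, e2, e3, Nat.choose_succ_succ]
    push_cast
    ring
  rw [Finset.sum_congr rfl hmain, Finset.sum_add_distrib]
  ring

lemma F_key (t : ℝ) (m f : ℕ) (hf : f ≤ m + 1) :
    Faux t (m+2) (f+1) = Faux t (m+1) (f+1) + Faux t (m+1) f + t * Faux t m f := by
  rcases Nat.lt_or_ge f (m+1) with h | h
  · rw [F_sub1 t m f hf, F_sub2 t m f (by omega)]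
    ring
  · have hf' : f = m + 1 := by omega
    subst hf'
    have d1 : Faux t (m+2) (m+2) = 1 := F_diag t (m+2)
    have d2 : Faux t (m+1) (m+2) = 0 := F_top t (m+1)
    have d3 : Faux t (m+1) (m+1) = 1 := F_diag t (m+1)
    have d4 : Faux t m (m+1) = 0 := F_top t m
    rw [d1, d2, d3, d4]
    ring

lemma speyerG_eq (t : ℝ) (m e : ℕ) : speyerG (m+2) (e+1) t = t * Faux t m e := by
  rw [speyerG, Faux, Finset.mul_sum, ← Finset.Ico_add_one_right_eq_Icc, Finset.sum_Ico_eq_sum_range]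
  have hr : e + 1 + 1 - 1 = e + 1 := by omega
  rw [hr]
  apply Finset.sum_congr rfl
  intro j hj
  have e1 : m + 2 - (1+j) - 1 = m - j := by omega
  have e2 : e + 1 - (1+j) = e - j := by omega
  have e3 : m + 2 - (e+1) - 1 = m - e := by omega
  have e4 : 1 + j - 1 = j := by omega
  rw [e1, e2, e3, e4]
  push_cast
  ring

lemma hPoly_eq (t : ℝ) (m : ℕ) :
    hPoly (m+2) t = ∑ e ∈ Finset.range (m+1),
      Polynomial.C (t * Faux t m e) * Polynomial.X ^ (e+1) := by
  rw [hPoly]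
  have hr : m + 2 - 1 = m + 1 := by omega
  rw [hr, ← Finset.Ico_add_one_right_eq_Icc, Finset.sum_Ico_eq_sum_range]
  have hr2 : m + 1 + 1 - 1 = m + 1 := by omega
  rw [hr2]
  apply Finset.sum_congr rfl
  intro e he
  have e1 : 1 + e = e + 1 := by omega
  rw [e1, speyerG_eq]

lemma hrec (t : ℝ) (m : ℕ) :
    hPoly (m+4) t = (1 + Polynomial.X) * hPoly (m+3) t
      + Polynomial.C t * Polynomial.X * hPoly (m+2) t := by
  have A := hPoly_eq t (m+2)
  have B := hPoly_eq t (m+1)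
  have Cc := hPoly_eq t m
  rw [show m+2+2 = m+4 by omega] at A
  rw [show m+1+2 = m+3 by omega] at B
  rw [A, B, Cc]
  have lhs_eq : (∑ e ∈ Finset.range (m+2+1), Polynomial.C (t * Faux t (m+2) e) * Polynomial.X ^ (e+1))
      = (∑ f ∈ Finset.range (m+1), Polynomial.C (t * Faux t (m+1) (f+1)) * Polynomial.X ^ (f+1+1))
      + ((∑ f ∈ Finset.range (m+1), Polynomial.C (t * Faux t (m+1) (f+1)) * Polynomial.X ^ (f+1+1+1))
          + Polynomial.C (t * 1) * Polynomial.X ^ (0+1+1))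
      + (∑ f ∈ Finset.range (m+1), Polynomial.C (t * (t * Faux t m f)) * Polynomial.X ^ (f+1+1))
      + Polynomial.C (t * 1) * Polynomial.X ^ (0+1) := by
    rw [Finset.sum_range_succ' (fun e => Polynomial.C (t * Faux t (m+2) e) * Polynomial.X ^ (e+1)) (m+2)]
    have hsplit : ∀ f ∈ Finset.range (m+2),
        Polynomial.C (t * Faux t (m+2) (f+1)) * Polynomial.X ^ (f+1+1)
        = Polynomial.C (t * Faux t (m+1) (f+1)) * Polynomial.X ^ (f+1+1)
          + Polynomial.C (t * Faux t (m+1) f) * Polynomial.X ^ (f+1+1)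
          + Polynomial.C (t * (t * Faux t m f)) * Polynomial.X ^ (f+1+1) := by
      intro f hf
      simp only [Finset.mem_range] at hf
      rw [F_key t m f (by omega)]
      rw [show t * (Faux t (m+1) (f+1) + Faux t (m+1) f + t * Faux t m f)
          = t * Faux t (m+1) (f+1) + t * Faux t (m+1) f + t * (t * Faux t m f) by ring]
      rw [map_add, map_add]
      ring
    rw [Finset.sum_congr rfl hsplit, Finset.sum_add_distrib, Finset.sum_add_distrib]
    rw [Finset.sum_range_succ (fun f => Polynomial.C (t * Faux t (m+1) (f+1)) * Polynomial.X ^ (f+1+1)) (m+1)]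
    rw [Finset.sum_range_succ (fun f => Polynomial.C (t * (t * Faux t m f)) * Polynomial.X ^ (f+1+1)) (m+1)]
    rw [Finset.sum_range_succ' (fun f => Polynomial.C (t * Faux t (m+1) f) * Polynomial.X ^ (f+1+1)) (m+1)]
    rw [F_top t (m+1), F_top t m]
    simp only [F_zero, mul_zero, map_zero, zero_mul, add_zero]
  rw [lhs_eq]
  rw [add_mul, one_mul]
  rw [Finset.sum_range_succ' (fun e => Polynomial.C (t * Faux t (m+1) e) * Polynomial.X ^ (e+1)) (m+1)]
  simp only [F_zero]
  rw [mul_add, Finset.mul_sum, Finset.mul_sum]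
  have h2 : ∀ f ∈ Finset.range (m+1),
      Polynomial.X * (Polynomial.C (t * Faux t (m+1) (f+1)) * Polynomial.X ^ (f+1+1))
      = Polynomial.C (t * Faux t (m+1) (f+1)) * Polynomial.X ^ (f+1+1+1) := by
    intro f hf; ring
  have h3 : ∀ f ∈ Finset.range (m+1),
      Polynomial.C t * Polynomial.X * (Polynomial.C (t * Faux t m f) * Polynomial.X ^ (f+1))
      = Polynomial.C (t * (t * Faux t m f)) * Polynomial.X ^ (f+1+1) := by
    intro f hf
    simp only [map_mul]
    ring
  rw [Finset.sum_congr rfl h2, Finset.sum_congr rfl h3]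
  ring

noncomputable def gam (t : ℝ) : ℕ → ℕ → ℝ
  | _, 0 => 0
  | 2, 1 => t
  | 3, 1 => t
  | (n+4), (i+1) => if i + 1 ≤ (n+4)/2 then gam t (n+3) (i+1) + t * gam t (n+2) i else 0
  | _, _ => 0

lemma gam_zero_right (t : ℝ) (n : ℕ) : gam t n 0 = 0 := by
  match n with
  | 0 => rfl
  | 1 => rfl
  | 2 => rfl
  | 3 => rfl
  | (n+4) => rfl

lemma gam_eq_zero_of_gt (t : ℝ) (n i : ℕ) (h : n / 2 < i) : gam t n i = 0 := by
  match n, i with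
  | _, 0 => exact gam_zero_right t _
  | 0, (i+1) => simp [gam]
  | 1, (i+1) => simp [gam]
  | 2, 1 => omega
  | 3, 1 => omega
  | 2, (i+2) => rfl
  | 3, (i+2) => rfl
  | (n+4), (i+1) => simp only [gam]; rw [if_neg (by omega)]

lemma gam_rec (t : ℝ) (m i : ℕ) (h : i + 1 ≤ (m+4)/2) :
    gam t (m+4) (i+1) = gam t (m+3) (i+1) + t * gam t (m+2) i := by
  simp only [gam]; rw [if_pos h]

lemma expansion (t : ℝ) : ∀ m : ℕ, hPoly (m+2) t =
    ∑ i ∈ Finset.range ((m+2)/2 + 1),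
      Polynomial.C (gam t (m+2) i) * Polynomial.X ^ i * (1 + Polynomial.X) ^ (m+2 - 2*i) := by
  have base0 : hPoly 2 t =
      ∑ i ∈ Finset.range (2/2 + 1),
        Polynomial.C (gam t 2 i) * Polynomial.X ^ i * (1 + Polynomial.X) ^ (2 - 2*i) := by
    have h1 : hPoly 2 t = Polynomial.C t * Polynomial.X := by
      rw [hPoly]
      norm_num
      rw [speyerG]
      norm_num
    rw [h1]
    norm_num [Finset.sum_range_succ]
    rw [show gam t 2 0 = 0 from rfl, show gam t 2 1 = t from rfl]
    simp
  have base1 : hPoly 3 t =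
      ∑ i ∈ Finset.range (3/2 + 1),
        Polynomial.C (gam t 3 i) * Polynomial.X ^ i * (1 + Polynomial.X) ^ (3 - 2*i) := by
    have h1 : hPoly 3 t = Polynomial.C t * Polynomial.X
        + Polynomial.C t * Polynomial.X ^ 2 := by
      rw [hPoly]
      have : (3:ℕ) - 1 = 2 := by norm_num
      rw [this, show Finset.Icc 1 2 = {1, 2} from rfl]
      rw [Finset.sum_insert (by decide), Finset.sum_singleton]
      rw [speyerG, speyerG]
      rw [show Finset.Icc 1 1 = {1} from rfl, show Finset.Icc 1 2 = {1, 2} from rfl]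
      rw [Finset.sum_insert (by decide), Finset.sum_singleton, Finset.sum_singleton]
      norm_num
    rw [h1]
    norm_num [Finset.sum_range_succ]
    rw [show gam t 3 0 = 0 from rfl, show gam t 3 1 = t from rfl]
    simp
    ring
  have step : ∀ m : ℕ,
      (hPoly (m+2) t = ∑ i ∈ Finset.range ((m+2)/2 + 1),
        Polynomial.C (gam t (m+2) i) * Polynomial.X ^ i * (1 + Polynomial.X) ^ (m+2 - 2*i)) →
      (hPoly (m+3) t = ∑ i ∈ Finset.range ((m+3)/2 + 1),
        Polynomial.C (gam t (m+3) i) * Polynomial.X ^ i * (1 + Polynomial.X) ^ (m+3 - 2*i)) →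
      hPoly (m+4) t = ∑ i ∈ Finset.range ((m+4)/2 + 1),
        Polynomial.C (gam t (m+4) i) * Polynomial.X ^ i * (1 + Polynomial.X) ^ (m+4 - 2*i) := by
    intro m ih0 ih1
    rw [hrec t m, ih0, ih1]
    -- split the target sum
    have key : ∀ i ∈ Finset.range ((m+4)/2 + 1),
        Polynomial.C (gam t (m+4) i) * Polynomial.X ^ i * (1 + Polynomial.X) ^ (m+4 - 2*i)
        = Polynomial.C (gam t (m+3) i) * Polynomial.X ^ i * (1 + Polynomial.X) ^ (m+4 - 2*i)
          + Polynomial.C (t * (if i = 0 then 0 else gam t (m+2) (i-1)))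
              * Polynomial.X ^ i * (1 + Polynomial.X) ^ (m+4 - 2*i) := by
      intro i hi
      simp only [Finset.mem_range] at hi
      rcases i with _ | j
      · simp [gam_zero_right]
      · simp only [Nat.succ_ne_zero, if_false, Nat.succ_sub_one]
        rw [gam_rec t m j (by omega), map_add, map_mul]
        push_cast
        ring
    rw [Finset.sum_congr rfl key, Finset.sum_add_distrib]
    congr 1
    · -- first part: (1+X) * (expansion at m+3)
      rw [Finset.mul_sum]
      have term_eq : ∀ i ∈ Finset.range ((m+3)/2 + 1),
          (1 + Polynomial.X) * (Polynomial.C (gam t (m+3) i) * Polynomial.X ^ i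
            * (1 + Polynomial.X) ^ (m+3 - 2*i))
          = Polynomial.C (gam t (m+3) i) * Polynomial.X ^ i
            * (1 + Polynomial.X) ^ (m+4 - 2*i) := by
        intro i hi
        simp only [Finset.mem_range] at hi
        have h2i : 2 * i ≤ m + 3 := by
          have := Nat.div_mul_le_self (m+3) 2
          omega
        have e : m + 4 - 2*i = (m + 3 - 2*i) + 1 := by omega
        rw [e, pow_succ]
        ring
      rw [Finset.sum_congr rfl term_eq]
      apply Finset.sum_subset
      · apply Finset.range_subset_range.mpr
        omega
      · intro i hi hni
        simp only [Finset.mem_range] at hi hni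
        rw [gam_eq_zero_of_gt t (m+3) i (by omega)]
        simp
    · -- second part: C t * X * (expansion at m+2)
      rw [Finset.mul_sum]
      have hk : (m+4)/2 + 1 = ((m+2)/2 + 1) + 1 := by omega
      rw [hk]
      rw [Finset.sum_range_succ' (fun i => Polynomial.C (t * (if i = 0 then 0 else gam t (m+2) (i-1)))
            * Polynomial.X ^ i * (1 + Polynomial.X) ^ (m+4 - 2*i)) ((m+2)/2 + 1)]
      simp only [if_pos rfl, ite_true, eq_self_iff_true, Nat.succ_ne_zero, if_false,
        Nat.succ_sub_one, mul_zero, map_zero, zero_mul, add_zero]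
      apply Finset.sum_congr rfl
      intro j hj
      have e : m + 4 - 2*(j+1) = m + 2 - 2*j := by omega
      rw [e, map_mul]
      ring
  intro m
  induction m using Nat.strong_induction_on with
  | _ m ih =>
    match m with
    | 0 => exact base0
    | 1 => exact base1
    | (m+2) => exact step m (ih m (by omega)) (ih (m+1) (by omega))


noncomputable def gamZ (t : ℝ) (n : ℕ) (i : ℤ) : ℝ :=
  if i < 0 then 0 else gam t n i.toNat

lemma gamZ_natCast (t : ℝ) (n j : ℕ) : gamZ t n (j : ℤ) = gam t n j := by
  rw [gamZ, if_neg (by exact Int.not_lt.mpr (Int.natCast_nonneg j)), Int.toNat_natCast]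

lemma gamZ_neg_one (t : ℝ) (n : ℕ) : gamZ t n (-1) = 0 := by
  rw [gamZ, if_pos (by norm_num)]

theorem hPoly_gamma_expansion (t : ℝ) :
    ∃ γ : ℕ → ℤ → ℝ,
      (∀ n : ℕ, 2 ≤ n →
        hPoly n t = ∑ i ∈ Finset.range (n / 2 + 1),
          Polynomial.C (γ n i) * Polynomial.X ^ i * (1 + Polynomial.X) ^ (n - 2 * i)) ∧
      γ 2 0 = 0 ∧ γ 3 0 = 0 ∧ γ 2 1 = t ∧ γ 3 1 = t ∧
      (∀ n : ℕ, 2 ≤ n → γ n (-1) = 0 ∧ γ n ((n / 2 : ℕ) + 1) = 0) ∧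
      (∀ n : ℕ, 4 ≤ n → ∀ i : ℤ, 0 ≤ i → i ≤ ((n / 2 : ℕ) : ℤ) →
        γ n i = γ (n - 1) i + t * γ (n - 2) (i - 1)) := by
  refine ⟨gamZ t, ?_, ?_, ?_, ?_, ?_, ?_, ?_⟩
  · intro n hn
    obtain ⟨m, rfl⟩ : ∃ m, n = m + 2 := ⟨n - 2, by omega⟩
    rw [expansion t m]
    apply Finset.sum_congr rfl
    intro i hi
    rw [gamZ_natCast]
  · rw [show (0:ℤ) = ((0:ℕ):ℤ) by norm_num, gamZ_natCast]; rfl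
  · rw [show (0:ℤ) = ((0:ℕ):ℤ) by norm_num, gamZ_natCast]; rfl
  · rw [show (1:ℤ) = ((1:ℕ):ℤ) by norm_num, gamZ_natCast]; rfl
  · rw [show (1:ℤ) = ((1:ℕ):ℤ) by norm_num, gamZ_natCast]; rfl
  · intro n hn
    refine ⟨gamZ_neg_one t n, ?_⟩
    rw [show ((n/2 : ℕ) : ℤ) + 1 = ((n/2 + 1 : ℕ) : ℤ) by push_cast; ring, gamZ_natCast]
    exact gam_eq_zero_of_gt t n _ (by omega)
  · intro n hn i h0 hle
    obtain ⟨m, rfl⟩ : ∃ m, n = m + 4 := ⟨n - 4, by omega⟩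
    have e1 : m + 4 - 1 = m + 3 := by omega
    have e2 : m + 4 - 2 = m + 2 := by omega
    rw [e1, e2]
    lift i to ℕ using h0
    rcases i with _ | j
    · rw [show ((0:ℕ):ℤ) - 1 = -1 by norm_num, gamZ_neg_one, gamZ_natCast, gamZ_natCast]
      rw [gam_zero_right, gam_zero_right]
      ring
    · rw [show (((j+1:ℕ)):ℤ) - 1 = ((j:ℕ):ℤ) by push_cast; ring]
      rw [gamZ_natCast, gamZ_natCast, gamZ_natCast]
      have hcond : j + 1 ≤ (m+4)/2 := by
        have h2 := hle
        have : ((j+1 : ℕ) : ℤ) ≤ (((m+4)/2 : ℕ) : ℤ) := h2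
        exact_mod_cast this
      exact gam_rec t m j hcond
end

section
/- For t > 0, the sequence f_n = h_n(1;t) satisfies f_{n+2} = 2f_{n+1} + t·f_n for n ≥ 2, and the ratio f_{n+1}/f_n converges to 1 + √(t+1) as n → ∞. -/
open Polynomial Finset

/-- Trinomial revision, total version. -/
lemma tri_choose (m e k : ℕ) : m.choose e * (m - e).choose k = m.choose k * (m - k).choose e := by
  by_cases hem : e ≤ m
  · by_cases hkm : k ≤ m
    · by_cases h : e + k ≤ m
      · have h1 := Nat.choose_mul (n := m) (k := k + e) (s := e) (by omega)
        have h2 := Nat.choose_mul (n := m) (k := k + e) (s := k) (by omega)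
        have h3 : (k + e).choose e = (k + e).choose k := by
          rw [← Nat.choose_symm (by omega : e ≤ k + e)]
          congr 1
          omega
        rw [show k + e - e = k by omega] at h1
        rw [show k + e - k = e by omega] at h2
        rw [h3] at h1
        omega
      · rw [Nat.choose_eq_zero_of_lt (by omega : m - e < k),
          Nat.choose_eq_zero_of_lt (by omega : m - k < e)]
        ring
    · rw [Nat.choose_eq_zero_of_lt (by omega : m - e < k),
        Nat.choose_eq_zero_of_lt (by omega : m < k)]
      ring
  · rw [Nat.choose_eq_zero_of_lt (by omega : m < e),
      Nat.choose_eq_zero_of_lt (by omega : m - k < e)]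
    ring

lemma sum_tri (m k : ℕ) :
    ∑ e ∈ range (m + 1), m.choose e * (m - e).choose k = m.choose k * 2 ^ (m - k) := by
  have h1 : ∀ e ∈ range (m + 1), m.choose e * (m - e).choose k
      = m.choose k * (m - k).choose e := fun e _ => tri_choose m e k
  rw [Finset.sum_congr rfl h1, ← Finset.mul_sum]
  congr 1
  rw [← Nat.sum_range_choose (m - k)]
  symm
  apply Finset.sum_subset
  · exact Finset.range_subset_range.2 (by omega)
  · intro e _ he
    exact Nat.choose_eq_zero_of_lt (by simp at he ⊢; omega)

lemma eval_eq_sumB (n : ℕ) (t : ℝ) :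
    (hPoly n t).eval 1 =
      ∑ i ∈ Icc 1 (n - 1),
        ((n - i - 1).choose (i - 1) : ℝ) * 2 ^ (n - i - 1 - (i - 1)) * t ^ i := by
  have h0 : (hPoly n t).eval 1 = ∑ d ∈ Icc 1 (n - 1), speyerG n d t := by
    simp [hPoly, eval_finset_sum]
  rw [h0]
  unfold speyerG
  rw [Finset.sum_comm' (t' := Icc 1 (n - 1)) (s' := fun i => Icc i (n - 1))
    (by intro d i; simp only [mem_Icc]; omega)]
  refine Finset.sum_congr rfl fun i hi => ?_
  simp only [mem_Icc] at hi
  have hsum : ∑ d ∈ Icc i (n - 1),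
      ((n - d - 1).choose (i - 1) : ℝ) * t ^ i * ((n - i - 1).choose (d - i) : ℝ)
      = (∑ d ∈ Icc i (n - 1),
          ((n - i - 1).choose (d - i) * ((n - d - 1).choose (i - 1)) : ℕ)) * t ^ i := by
    push_cast
    rw [Finset.sum_mul]
    exact Finset.sum_congr rfl fun d _ => by ring
  calc ∑ d ∈ Icc i (n - 1), ((n - i - 1).choose (d - i) : ℝ)
        * ((n - d - 1).choose (i - 1) : ℝ) * t ^ i
      = (∑ d ∈ Icc i (n - 1),
          ((n - i - 1).choose (d - i) * ((n - d - 1).choose (i - 1)) : ℕ)) * t ^ i := by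
        rw [← hsum]; exact Finset.sum_congr rfl fun d _ => by ring
    _ = ((n - i - 1).choose (i - 1) * 2 ^ (n - i - 1 - (i - 1)) : ℕ) * t ^ i := by
        congr 1
        norm_cast
        rw [← Finset.Ico_add_one_right_eq_Icc, Finset.sum_Ico_eq_sum_range]
        rw [show n - 1 + 1 - i = n - i - 1 + 1 by omega]
        rw [← sum_tri (n - i - 1) (i - 1)]
        refine Finset.sum_congr rfl fun e he => ?_
        simp only [mem_range] at he
        congr 2 <;> omega
    _ = _ := by push_cast; ring

noncomputable def Sf (t : ℝ) (n : ℕ) : ℝ :=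
  ∑ i ∈ Icc 1 n, ((n - i - 1).choose (i - 1) : ℝ) * t ^ i * 2 ^ n / 4 ^ i

noncomputable def Pt (t : ℝ) (m k : ℕ) : ℝ :=
  ((m - k - 2).choose k : ℝ) * t ^ (k+1) * 2 ^ m / 4 ^ (k+1)

lemma sumB_eq_Sf (n : ℕ) (hn : 2 ≤ n) (t : ℝ) :
    (∑ i ∈ Icc 1 (n - 1),
        ((n - i - 1).choose (i - 1) : ℝ) * 2 ^ (n - i - 1 - (i - 1)) * t ^ i) = Sf t n := by
  unfold Sf
  rw [show (Icc 1 n : Finset ℕ) = Icc 1 ((n-1)+1) by congr 1; omega,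
    Finset.sum_Icc_succ_top (by omega : 1 ≤ (n-1)+1)]
  rw [show (n-1)+1 = n by omega]
  rw [show n - n - 1 = 0 by omega, Nat.choose_eq_zero_of_lt (by omega : 0 < n - 1)]
  rw [Nat.cast_zero, zero_mul, zero_mul, zero_div, add_zero]
  refine Finset.sum_congr rfl fun i hi => ?_
  simp only [mem_Icc] at hi
  by_cases h2 : 2 * i ≤ n
  · rw [show n - i - 1 - (i - 1) = n - 2 * i by omega]
    have h4 : (4:ℝ) ^ i * 2 ^ (n - 2*i) = 2 ^ n := by
      rw [show (4:ℝ) = 2^2 by norm_num, ← pow_mul, ← pow_add]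
      congr 1; omega
    have h4' : (4:ℝ) ^ i ≠ 0 := by positivity
    field_simp
    linear_combination (((n - i - 1).choose (i - 1) : ℝ) * t ^ i) * h4
  · rw [Nat.choose_eq_zero_of_lt (by omega : n - i - 1 < i - 1)]
    simp

lemma Sf_eq_Pt_sum (t : ℝ) (m : ℕ) : Sf t m = ∑ k ∈ range m, Pt t m k := by
  unfold Sf Pt
  rw [← Finset.Ico_add_one_right_eq_Icc, Finset.sum_Ico_eq_sum_range,
    show m + 1 - 1 = m from rfl]
  refine Finset.sum_congr rfl fun k hk => ?_
  rw [show 1 + k - 1 = k by omega, show m - (1+k) - 1 = m - k - 2 by omega,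
    show 1 + k = k + 1 by omega]

lemma Sf_rec (n : ℕ) (hn : 2 ≤ n) (t : ℝ) :
    Sf t (n + 2) = 2 * Sf t (n + 1) + t * Sf t n := by
  have hpt : ∀ k < n, Pt t (n+2) (k+1) = 2 * Pt t (n+1) (k+1) + t * Pt t n k := by
    intro k hk
    have hp : (n-k-1).choose (k+1) = (n-k-2).choose (k+1) + (n-k-2).choose k := by
      rcases Nat.lt_or_ge k (n-1) with h | h
      · obtain ⟨m, hm⟩ : ∃ m, n - k - 2 = m := ⟨_, rfl⟩
        rw [hm, show n - k - 1 = m + 1 by omega, Nat.choose_succ_succ']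
        omega
      · rw [show n - k - 1 = 0 by omega, show n - k - 2 = 0 by omega,
          Nat.choose_eq_zero_of_lt (by omega : 0 < k + 1),
          Nat.choose_eq_zero_of_lt (by omega : (0:ℕ) < k)]
    unfold Pt
    rw [show n+2-(k+1)-2 = n-k-1 by omega, show n+1-(k+1)-2 = n-k-2 by omega, hp]
    have h4 : (4:ℝ) ^ (k+1+1) ≠ 0 := by positivity
    have h4' : (4:ℝ) ^ (k+1) ≠ 0 := by positivity
    push_cast
    field_simp
    ring
  have hA0 : Pt t (n+2) 0 = 2 * Pt t (n+1) 0 := by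
    unfold Pt
    rw [show n+2-0-2 = n by omega, show n+1-0-2 = n-1 by omega]
    simp only [Nat.choose_zero_right]
    push_cast
    ring
  have htop : Pt t (n+2) (n+1) = 0 := by
    unfold Pt
    rw [show n+2-(n+1)-2 = 0 by omega, Nat.choose_eq_zero_of_lt (by omega : 0 < n + 1)]
    simp
  rw [Sf_eq_Pt_sum, Sf_eq_Pt_sum, Sf_eq_Pt_sum]
  rw [Finset.sum_range_succ' (fun k => Pt t (n+2) k) (n+1),
    Finset.sum_range_succ (fun k => Pt t (n+2) (k+1)) n,
    Finset.sum_range_succ' (fun k => Pt t (n+1) k) n, htop, hA0]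
  rw [Finset.sum_congr rfl (fun k hk => hpt k (Finset.mem_range.1 hk))]
  rw [Finset.sum_add_distrib, ← Finset.mul_sum, ← Finset.mul_sum]
  ring

lemma Sf_two (t : ℝ) : Sf t 2 = t := by
  unfold Sf
  rw [show (Icc 1 2 : Finset ℕ) = {1, 2} by rfl]
  rw [Finset.sum_insert (by decide), Finset.sum_singleton]
  norm_num

lemma Sf_three (t : ℝ) : Sf t 3 = 2 * t := by
  unfold Sf
  rw [show (Icc 1 3 : Finset ℕ) = {1, 2, 3} by rfl]
  rw [Finset.sum_insert (by decide), Finset.sum_insert (by decide), Finset.sum_singleton]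
  norm_num
  ring

theorem hPoly_eval_one_ratio (t : ℝ) (ht : 0 < t) (f : ℕ → ℝ)
    (hf : ∀ n : ℕ, f n = (hPoly n t).eval 1) :
    (∀ n : ℕ, 2 ≤ n → f (n + 2) = 2 * f (n + 1) + t * f n) ∧
    Filter.Tendsto (fun n : ℕ => f (n + 1) / f n) Filter.atTop
      (nhds (1 + Real.sqrt (t + 1))) := by
  have hfS : ∀ m : ℕ, 2 ≤ m → f m = Sf t m := fun m hm => by
    rw [hf, eval_eq_sumB, sumB_eq_Sf m hm]
  have hrec : ∀ n : ℕ, 2 ≤ n → f (n + 2) = 2 * f (n + 1) + t * f n := by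
    intro n hn
    rw [hfS (n+2) (by omega), hfS (n+1) (by omega), hfS n hn]
    exact Sf_rec n hn t
  refine ⟨hrec, ?_⟩
  -- set up the roots
  set s : ℝ := Real.sqrt (t + 1) with hs_def
  have hs2 : s ^ 2 = t + 1 := Real.sq_sqrt (by linarith)
  have hs1 : 1 < s := by
    have : (1:ℝ) < t + 1 := by linarith
    nlinarith [Real.sqrt_nonneg (t+1)]
  have hs0 : (0:ℝ) < s := by linarith
  set r : ℝ := 1 + s with hr_def
  set q : ℝ := 1 - s with hq_def
  have hrpos : 0 < r := by simp only [hr_def]; linarith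
  have hr2 : r ^ 2 = 2 * r + t := by simp only [hr_def]; linear_combination hs2
  have hq2 : q ^ 2 = 2 * q + t := by simp only [hq_def]; linear_combination hs2
  set U : ℕ → ℝ := fun n => t * (r ^ n - q ^ n) / (2 * s) with hU_def
  have hUrec : ∀ n : ℕ, U (n + 2) = 2 * U (n + 1) + t * U n := by
    intro n
    have hrp : r ^ (n+2) = 2 * r ^ (n+1) + t * r ^ n := by
      calc r ^ (n+2) = r ^ n * r ^ 2 := by ring
        _ = r ^ n * (2*r + t) := by rw [hr2]
        _ = 2 * r ^ (n+1) + t * r ^ n := by ring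
    have hqp : q ^ (n+2) = 2 * q ^ (n+1) + t * q ^ n := by
      calc q ^ (n+2) = q ^ n * q ^ 2 := by ring
        _ = q ^ n * (2*q + t) := by rw [hq2]
        _ = 2 * q ^ (n+1) + t * q ^ n := by ring
    simp only [hU_def]
    rw [hrp, hqp]
    ring
  have h2s : (2:ℝ) * s ≠ 0 := by positivity
  have hU1 : U 1 = t := by
    show t * (r ^ 1 - q ^ 1) / (2 * s) = t
    rw [pow_one, pow_one, show r - q = 2 * s by rw [hr_def, hq_def]; ring,
      mul_div_assoc, div_self h2s, mul_one]
  have hU2 : U 2 = 2 * t := by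
    show t * (r ^ 2 - q ^ 2) / (2 * s) = 2 * t
    rw [show r ^ 2 - q ^ 2 = 2 * (2 * s) by rw [hr2, hq2, hr_def, hq_def]; ring,
      show t * (2 * (2 * s)) = 2 * t * (2 * s) by ring,
      mul_div_assoc, div_self h2s, mul_one]
  -- closed form by two-step induction
  have key2 : ∀ n : ℕ, f (n + 2) = U (n + 1) ∧ f (n + 3) = U (n + 2) := by
    intro n
    induction n with
    | zero =>
      constructor
      · rw [hfS 2 (by norm_num), Sf_two, hU1]
      · rw [hfS 3 (by norm_num), Sf_three, hU2]
    | succ n ih =>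
      refine ⟨ih.2, ?_⟩
      have h1 : f (n + 4) = 2 * f (n + 3) + t * f (n + 2) := hrec (n + 2) (by omega)
      rw [show n + 1 + 3 = n + 4 from rfl, h1, ih.1, ih.2,
        show n + 1 + 2 = n + 2 + 1 from rfl, hUrec (n+1)]
  have key : ∀ n : ℕ, f (n + 2) = U (n + 1) := fun n => (key2 n).1
  -- the limit
  set x : ℝ := q / r with hx_def
  have habsq : |q| < r := by
    rw [hq_def, hr_def, abs_of_nonpos (by linarith)]
    linarith
  have hx1 : |x| < 1 := by
    rw [hx_def, abs_div, abs_of_pos hrpos, div_lt_one hrpos]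
    exact habsq
  have hxpow : Filter.Tendsto (fun n : ℕ => x ^ n) Filter.atTop (nhds 0) :=
    tendsto_pow_atTop_nhds_zero_iff.mpr hx1
  have hxpow2 : Filter.Tendsto (fun n : ℕ => x ^ (n + 2)) Filter.atTop (nhds 0) :=
    (Filter.tendsto_add_atTop_iff_nat 2).2 hxpow
  have hxpow1 : Filter.Tendsto (fun n : ℕ => x ^ (n + 1)) Filter.atTop (nhds 0) :=
    (Filter.tendsto_add_atTop_iff_nat 1).2 hxpow
  have hG : Filter.Tendsto (fun n : ℕ => r * (1 - x ^ (n + 2)) / (1 - x ^ (n + 1)))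
      Filter.atTop (nhds r) := by
    have hnum : Filter.Tendsto (fun n : ℕ => r * (1 - x ^ (n + 2))) Filter.atTop
        (nhds (r * (1 - 0))) :=
      Filter.Tendsto.const_mul r (Filter.Tendsto.sub tendsto_const_nhds hxpow2)
    have hden : Filter.Tendsto (fun n : ℕ => 1 - x ^ (n + 1)) Filter.atTop
        (nhds (1 - 0)) :=
      Filter.Tendsto.sub tendsto_const_nhds hxpow1
    have h := hnum.div hden (by norm_num)
    rw [show r * (1 - 0) / (1 - 0) = r by ring] at h
    exact h
  rw [← Filter.tendsto_add_atTop_iff_nat 2]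
  refine Filter.Tendsto.congr (fun n => ?_) hG
  show r * (1 - x ^ (n + 2)) / (1 - x ^ (n + 1)) = f (n + 2 + 1) / f (n + 2)
  have h1 : f (n + 3) = U (n + 2) := key (n + 1)
  have h2 : f (n + 2) = U (n + 1) := key n
  rw [show n + 2 + 1 = n + 3 from rfl, h1, h2]
  show r * (1 - x ^ (n + 2)) / (1 - x ^ (n + 1))
    = (t * (r ^ (n + 2) - q ^ (n + 2)) / (2 * s)) / (t * (r ^ (n + 1) - q ^ (n + 1)) / (2 * s))
  have hqle : q ^ (n + 1) < r ^ (n + 1) := by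
    calc q ^ (n + 1) ≤ |q ^ (n + 1)| := le_abs_self _
      _ = |q| ^ (n + 1) := abs_pow q (n + 1)
      _ < r ^ (n + 1) := pow_lt_pow_left₀ habsq (abs_nonneg q) (Nat.succ_ne_zero n)
  have hB : r ^ (n + 1) - q ^ (n + 1) ≠ 0 := by linarith
  have hxle : x ^ (n + 1) < 1 := by
    calc x ^ (n + 1) ≤ |x ^ (n + 1)| := le_abs_self _
      _ = |x| ^ (n + 1) := abs_pow x (n + 1)
      _ < 1 := pow_lt_one₀ (abs_nonneg x) hx1 (Nat.succ_ne_zero n)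
  have hD : 1 - x ^ (n + 1) ≠ 0 := by linarith
  rw [hx_def]
  have hr0 : r ≠ 0 := ne_of_gt hrpos
  have ht0 : t ≠ 0 := ne_of_gt ht
  have hD' : r ^ (n + 1) - q ^ (n + 1) ≠ 0 := hB
  rw [div_pow, div_pow, div_div_div_cancel_right₀ h2s, mul_div_mul_left _ _ ht0]
  have hrn : r ^ (n + 1) ≠ 0 := pow_ne_zero _ hr0
  rw [one_sub_div (pow_ne_zero _ hr0), one_sub_div hrn, div_eq_div_iff (div_ne_zero hD' hrn) hD']
  field_simp
  ring
end

section
/- For t > 0 and n ≥ 2, the variance σ_n² = h_n''(1;t)/h_n(1;t) + n/2 − n²/4 of the coefficient distribution of h_n(x;t) satisfies σ_n² = ((n-1)/(4(t+1)))·h_{n+1}(1;t)/h_n(1;t) − n/(4(t+1)), and σ_n²/n → 1/(4√(t+1)) as n → ∞; in particular σ_n² → ∞. -/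
open Polynomial Finset

theorem sum_drop {f : ℕ → ℝ} (M N : ℕ) (h : M < N) (hf : ∀ x, M < x → f x = 0) :
    ∑ j ∈ range N, f j = ∑ j ∈ range (M+1), f j := by
  refine (Finset.sum_subset (fun x hx => ?_) (fun x _ hx => ?_)).symm
  · simp only [mem_range] at *; omega
  · exact hf x (by simp only [mem_range] at hx; omega)

theorem myW0 (M N : ℕ) (h : M < N) : ∑ j ∈ range N, (M.choose j : ℝ) = 2 ^ M := by
  rw [sum_drop M N h (fun x hx => by simp [Nat.choose_eq_zero_of_lt hx])]
  rw [← Nat.cast_sum, Nat.sum_range_choose]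
  push_cast; ring

theorem myW1 (M N : ℕ) (h : M < N) :
    ∑ j ∈ range N, (j : ℝ) * (M.choose j : ℝ) = M * 2 ^ M / 2 := by
  rw [sum_drop M N h (fun x hx => by simp [Nat.choose_eq_zero_of_lt hx])]
  cases M with
  | zero => simp
  | succ M' =>
    rw [Finset.sum_range_succ']
    have key : ∀ j ∈ range (M'+1), ((j+1 : ℕ) : ℝ) * ((M'+1).choose (j+1) : ℝ)
        = ((M'+1 : ℕ) : ℝ) * (M'.choose j : ℝ) := by
      intro j _
      have h2 : (M'+1) * M'.choose j = ((M'+1).choose (j+1)) * (j+1) :=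
        Nat.add_one_mul_choose_eq M' j
      have h3 : (j+1) * ((M'+1).choose (j+1)) = (M'+1) * M'.choose j := by
        rw [mul_comm]; exact h2.symm
      exact_mod_cast h3
    rw [Finset.sum_congr rfl key, ← Finset.mul_sum, myW0 M' (M'+1) (by omega)]
    push_cast; ring

theorem myW2 (M N : ℕ) (h : M < N) :
    ∑ j ∈ range N, (j : ℝ) * ((j:ℝ) - 1) * (M.choose j : ℝ) = M * (M - 1) * 2 ^ M / 4 := by
  rw [sum_drop M N h (fun x hx => by simp [Nat.choose_eq_zero_of_lt hx])]
  cases M with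
  | zero =>
    rw [show (0:ℕ)+1 = 1 from rfl, Finset.sum_range_one]; simp
  | succ M' =>
    rw [Finset.sum_range_succ']
    have key : ∀ j ∈ range (M'+1),
        ((j+1 : ℕ) : ℝ) * (((j+1:ℕ):ℝ) - 1) * ((M'+1).choose (j+1) : ℝ)
        = ((M'+1 : ℕ) : ℝ) * ((j:ℕ):ℝ) * (M'.choose j : ℝ) := by
      intro j _
      have h2 : (M'+1) * M'.choose j = ((M'+1).choose (j+1)) * (j+1) :=
        Nat.add_one_mul_choose_eq M' j
      have h3 : ((M'+1) * M'.choose j : ℕ) = (((M'+1).choose (j+1)) * (j+1) : ℕ) := h2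
      have h4 : (((M'+1) * M'.choose j : ℕ) : ℝ) = ((((M'+1).choose (j+1)) * (j+1) : ℕ) : ℝ) := by
        exact_mod_cast h3
      push_cast at h4
      push_cast
      nlinarith [h4]
    rw [Finset.sum_congr rfl key]
    have e2 : ∑ j ∈ range (M'+1), ((M'+1 : ℕ) : ℝ) * ((j:ℕ):ℝ) * (M'.choose j : ℝ)
        = ((M'+1:ℕ) : ℝ) * ∑ j ∈ range (M'+1), ((j:ℕ):ℝ) * (M'.choose j : ℝ) := by
      rw [Finset.mul_sum]; exact Finset.sum_congr rfl fun j _ => by ring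
    rw [e2, myW1 M' (M'+1) (by omega)]
    push_cast; ring

theorem myL3 (m j k : ℕ) : (m.choose j) * ((m-j).choose k) = (m.choose k) * ((m-k).choose j) := by
  rcases le_or_gt (j+k) m with h | h
  · have h1 := Nat.choose_mul (n:=m) (k:=j+k) (s:=j) (Nat.le_add_right _ _)
    have h2 := Nat.choose_mul (n:=m) (k:=j+k) (s:=k) (Nat.le_add_left _ _)
    have hs : (j+k).choose j = (j+k).choose k := by
      conv_lhs => rw [← Nat.choose_symm (Nat.le_add_right _ _)]
      congr 1; omega
    simp only [Nat.add_sub_cancel_left, Nat.add_sub_cancel] at h1 h2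
    rw [← h1, ← h2, hs]
  · rcases le_or_gt j m with hj | hj
    · rcases le_or_gt k m with hk | hk
      · have e1 : (m-j).choose k = 0 := Nat.choose_eq_zero_of_lt (by omega)
        have e2 : (m-k).choose j = 0 := Nat.choose_eq_zero_of_lt (by omega)
        simp [e1, e2]
      · simp [Nat.choose_eq_zero_of_lt hk, Nat.choose_eq_zero_of_lt (show m - j < k by omega)]
    · rcases le_or_gt k m with hk | hk
      · simp [Nat.choose_eq_zero_of_lt hj, Nat.choose_eq_zero_of_lt (show m - k < j by omega)]
      · simp [Nat.choose_eq_zero_of_lt hj, Nat.choose_eq_zero_of_lt hk]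

theorem myL3R (m j k : ℕ) : (m.choose j : ℝ) * ((m-j).choose k : ℝ) = (m.choose k : ℝ) * ((m-k).choose j : ℝ) := by
  exact_mod_cast congrArg (Nat.cast (R := ℝ)) (myL3 m j k)

theorem myI0 (m k : ℕ) :
    ∑ j ∈ range (m+1), (m.choose j : ℝ) * ((m-j).choose k : ℝ)
      = (m.choose k : ℝ) * 2 ^ (m-k) := by
  calc ∑ j ∈ range (m+1), (m.choose j : ℝ) * ((m-j).choose k : ℝ)
      = ∑ j ∈ range (m+1), (m.choose k : ℝ) * ((m-k).choose j : ℝ) :=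
        Finset.sum_congr rfl fun j _ => myL3R m j k
    _ = (m.choose k : ℝ) * ∑ j ∈ range (m+1), ((m-k).choose j : ℝ) := by rw [Finset.mul_sum]
    _ = _ := by rw [myW0 (m-k) (m+1) (by omega)]

theorem myI1 (m k : ℕ) :
    ∑ j ∈ range (m+1), (j:ℝ) * (m.choose j : ℝ) * ((m-j).choose k : ℝ)
      = (m.choose k : ℝ) * ((m-k : ℕ) : ℝ) * 2 ^ (m-k) / 2 := by
  calc ∑ j ∈ range (m+1), (j:ℝ) * (m.choose j : ℝ) * ((m-j).choose k : ℝ)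
      = ∑ j ∈ range (m+1), (m.choose k : ℝ) * ((j:ℝ) * ((m-k).choose j : ℝ)) :=
        Finset.sum_congr rfl fun j _ => by rw [mul_assoc, myL3R m j k]; ring
    _ = (m.choose k : ℝ) * ∑ j ∈ range (m+1), (j:ℝ) * ((m-k).choose j : ℝ) := by rw [Finset.mul_sum]
    _ = _ := by rw [myW1 (m-k) (m+1) (by omega)]; ring

theorem myI2 (m k : ℕ) :
    ∑ j ∈ range (m+1), (j:ℝ) * ((j:ℝ)-1) * (m.choose j : ℝ) * ((m-j).choose k : ℝ)
      = (m.choose k : ℝ) * ((m-k : ℕ) : ℝ) * (((m-k : ℕ) : ℝ) - 1) * 2 ^ (m-k) / 4 := by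
  calc ∑ j ∈ range (m+1), (j:ℝ) * ((j:ℝ)-1) * (m.choose j : ℝ) * ((m-j).choose k : ℝ)
      = ∑ j ∈ range (m+1), (m.choose k : ℝ) * ((j:ℝ) * ((j:ℝ)-1) * ((m-k).choose j : ℝ)) :=
        Finset.sum_congr rfl fun j _ => by rw [mul_assoc, mul_assoc, myL3R m j k]; ring
    _ = (m.choose k : ℝ) * ∑ j ∈ range (m+1), (j:ℝ) * ((j:ℝ)-1) * ((m-k).choose j : ℝ) := by
        rw [Finset.mul_sum]
    _ = _ := by rw [myW2 (m-k) (m+1) (by omega)]; ring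

noncomputable def cc (n i : ℕ) : ℝ :=
  if 1 ≤ i ∧ 2*i ≤ n then ((n-i-1).choose (i-1) : ℝ) * 2^(n-2*i) else 0

theorem cc_zero (n : ℕ) : cc n 0 = 0 := by simp [cc]

theorem cc_nonneg (n i : ℕ) : 0 ≤ cc n i := by
  unfold cc; split <;> positivity

theorem cc_one {n : ℕ} (hn : 2 ≤ n) : cc n 1 = 2^(n-2) := by
  unfold cc
  rw [if_pos ⟨le_refl 1, by omega⟩]
  simp

theorem ccRec (n i : ℕ) (hn : 2 ≤ n) : cc (n+1) i = 2 * cc n i + cc (n-1) (i-1) := by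
  unfold cc
  rcases Nat.eq_zero_or_pos i with h0 | h1
  · subst h0; norm_num
  rcases eq_or_lt_of_le (show 1 ≤ i from h1) with h1' | h2
  · have hi : i = 1 := by omega
    subst hi
    rw [if_pos ⟨by omega, by omega⟩, if_pos ⟨by omega, by omega⟩, if_neg (by omega)]
    simp only [Nat.sub_self, Nat.choose_zero_right, Nat.cast_one, one_mul]
    rw [show n+1-2*1 = (n-2*1)+1 by omega, pow_succ]
    ring
  · by_cases hg : 2*i ≤ n
    · rw [if_pos ⟨by omega, by omega⟩, if_pos ⟨by omega, hg⟩, if_pos ⟨by omega, by omega⟩]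
      rw [show n-1-(i-1)-1 = n-i-1 by omega, show i-1-1 = i-2 by omega,
        show n-1-2*(i-1) = (n-2*i)+1 by omega, show n+1-2*i = (n-2*i)+1 by omega,
        show n+1-i-1 = (n-i-1)+1 by omega, show i-1 = (i-2)+1 by omega,
        Nat.choose_succ_succ, pow_succ]
      push_cast; ring
    · by_cases hg2 : 2*i ≤ n+1
      · rw [if_pos ⟨by omega, hg2⟩, if_neg (by omega), if_pos ⟨by omega, by omega⟩]
        rw [show n-1-(i-1)-1 = i-2 by omega, show i-1-1 = i-2 by omega,
          show n-1-2*(i-1) = 0 by omega, show n+1-2*i = 0 by omega,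
          show n+1-i-1 = i-1 by omega, show i-1 = (i-2)+1 by omega]
        simp [Nat.choose_self]
      · rw [if_neg (by omega), if_neg (by omega), if_neg (by omega)]
        ring

theorem ccClean (n i : ℕ) (hn : 2 ≤ n) :
    (2*(n:ℝ) - 2*(i:ℝ)) * cc n i + ((n:ℝ) - 2*(i:ℝ) + 2) * cc n (i-1)
      = ((n:ℝ) - 1) * cc (n+1) i := by
  unfold cc
  rcases Nat.eq_zero_or_pos i with h0 | h1
  · subst h0; norm_num
  rcases eq_or_lt_of_le (show 1 ≤ i from h1) with h1' | h2
  · have hi : i = 1 := by omega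
    subst hi
    rw [if_pos ⟨by omega, by omega⟩, if_neg (by omega), if_pos ⟨by omega, by omega⟩]
    simp only [Nat.sub_self, Nat.choose_zero_right, Nat.cast_one, one_mul]
    rw [show n+1-2*1 = (n-2*1)+1 by omega, pow_succ]
    ring
  · by_cases hg : 2*i ≤ n
    · rw [if_pos ⟨by omega, hg⟩, if_pos ⟨by omega, by omega⟩, if_pos ⟨by omega, by omega⟩]
      rw [show n-(i-1)-1 = n-i by omega, show i-1-1 = i-2 by omega,
        show n-2*(i-1) = (n-2*i)+2 by omega, show n+1-2*i = (n-2*i)+1 by omega,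
        show n+1-i-1 = n-i by omega, pow_succ, pow_succ]
      have f1n : (n-i-1+1).choose (i-1) * ((n-i-1)+1 - (i-1)) = (n-i-1).choose (i-1) * ((n-i-1)+1) :=
        (Nat.choose_mul_succ_eq (n-i-1) (i-1)).symm
      have f2n : (n-i-1+1) * (n-i-1).choose (i-2) = (n-i-1+1).choose (i-2+1) * (i-2+1) :=
        Nat.add_one_mul_choose_eq (n-i-1) (i-2)
      have f3n : (n-i-1+1).choose (i-2) * ((n-i-1)+1 - (i-2)) = (n-i-1).choose (i-2) * ((n-i-1)+1) :=
        (Nat.choose_mul_succ_eq (n-i-1) (i-2)).symm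
      have e1 : n-i-1+1 = n-i := by omega
      have e2 : i-2+1 = i-1 := by omega
      rw [e1] at f1n f2n f3n
      rw [e2] at f2n
      have hni : ((n - i : ℕ):ℝ) = (n:ℝ) - i := Nat.cast_sub (by omega)
      have hi1 : ((i - 1 : ℕ):ℝ) = (i:ℝ) - 1 := by
        rw [Nat.cast_sub (by omega : 1 ≤ i)]; norm_num
      have hx : ((n - i - (i-1) : ℕ):ℝ) = (n:ℝ) - 2*i + 1 := by
        rw [show n-i-(i-1) = n+1-2*i by omega, Nat.cast_sub (by omega)]
        push_cast; ring
      have hy : ((n - i - (i-2) : ℕ):ℝ) = (n:ℝ) - 2*i + 2 := by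
        rw [show n-i-(i-2) = n+2-2*i by omega, Nat.cast_sub (by omega)]
        push_cast; ring
      have r1 : ((n-i).choose (i-1) : ℝ) * ((n:ℝ)-2*i+1) = ((n-i-1).choose (i-1):ℝ) * ((n:ℝ)-i) := by
        have h := congrArg (Nat.cast (R:=ℝ)) f1n
        rw [Nat.cast_mul, Nat.cast_mul, hx, hni] at h
        exact h
      have r2 : ((n:ℝ)-i) * ((n-i-1).choose (i-2):ℝ) = ((n-i).choose (i-1):ℝ) * ((i:ℝ)-1) := by
        have h := congrArg (Nat.cast (R:=ℝ)) f2n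
        rw [Nat.cast_mul, Nat.cast_mul, hni, hi1] at h
        exact h
      have r3 : ((n-i).choose (i-2):ℝ) * ((n:ℝ)-2*i+2) = ((n-i-1).choose (i-2):ℝ) * ((n:ℝ)-i) := by
        have h := congrArg (Nat.cast (R:=ℝ)) f3n
        rw [Nat.cast_mul, Nat.cast_mul, hy, hni] at h
        exact h
      linear_combination (-2*(2:ℝ)^(n-2*i))*r1 + (4*(2:ℝ)^(n-2*i))*r3 + (4*(2:ℝ)^(n-2*i))*r2
    · by_cases hg2 : 2*i ≤ n+1
      · -- 2i = n+1
        rw [if_neg (by omega), if_pos ⟨by omega, by omega⟩, if_pos ⟨by omega, hg2⟩]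
        rw [show n-(i-1)-1 = (i-2)+1 by omega, show i-1-1 = i-2 by omega,
          show n-2*(i-1) = 1 by omega, show n+1-i-1 = (i-2)+1 by omega,
          show n+1-2*i = 0 by omega, show i-1 = (i-2)+1 by omega,
          Nat.choose_succ_self_right, Nat.choose_self]
        have hni2 : ((i - 2 : ℕ):ℝ) = (i:ℝ) - 2 := Nat.cast_sub (by omega)
        have hni3 : (n:ℝ) = 2*(i:ℝ) - 1 := by
          have : (n:ℕ) = 2*i-1 := by omega
          rw [this, Nat.cast_sub (by omega)]; push_cast; ring
        rw [hni3]; push_cast [hni2]; ring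
      · by_cases hg3 : 1 ≤ i-1 ∧ 2*(i-1) ≤ n
        · rw [if_neg (by omega), if_pos hg3, if_neg (by omega)]
          have hz : (n:ℝ) - 2*(i:ℝ) + 2 = 0 := by
            have hni : n = 2*i - 2 := by omega
            rw [hni, Nat.cast_sub (by omega)]; push_cast; ring
          rw [hz]; ring
        · rw [if_neg (by omega), if_neg hg3, if_neg (by omega)]; ring

theorem sum_triangle (N : ℕ) (F : ℕ → ℕ → ℝ) :
    ∑ d ∈ Icc 1 N, ∑ i ∈ Icc 1 d, F d i = ∑ i ∈ Icc 1 N, ∑ d ∈ Icc i N, F d i := by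
  have step1 : ∑ d ∈ Icc 1 N, ∑ i ∈ Icc 1 d, F d i
      = ∑ d ∈ Icc 1 N, ∑ i ∈ Icc 1 N, if i ≤ d then F d i else 0 := by
    refine Finset.sum_congr rfl fun d hd => ?_
    rw [← Finset.sum_filter]
    refine Finset.sum_congr ?_ fun _ _ => rfl
    ext x
    simp only [mem_Icc, mem_filter] at *
    omega
  rw [step1, Finset.sum_comm]
  refine Finset.sum_congr rfl fun i hi => ?_
  rw [← Finset.sum_filter]
  refine Finset.sum_congr ?_ fun _ _ => rfl
  ext x
  simp only [mem_Icc, mem_filter] at *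
  omega

/-- generic weighted evaluation of `∑ d, w d * speyerG n d t` -/
theorem weightedSum (n : ℕ) (t : ℝ) (hn : 2 ≤ n) (w : ℕ → ℝ) :
    ∑ d ∈ Icc 1 (n-1), w d * speyerG n d t
      = ∑ i ∈ Icc 1 (n-1),
          (∑ j ∈ range ((n-i-1)+1), w (i+j) * (((n-i-1).choose j : ℝ) * (((n-i-1)-j).choose (i-1) : ℝ))) * t^i := by
  unfold speyerG
  have e1 : ∀ d, w d * (∑ i ∈ Icc 1 d, ((n-i-1).choose (d-i) : ℝ) * ((n-d-1).choose (i-1) : ℝ) * t^i)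
      = ∑ i ∈ Icc 1 d, w d * (((n-i-1).choose (d-i) : ℝ) * ((n-d-1).choose (i-1) : ℝ)) * t^i := by
    intro d; rw [Finset.mul_sum]; exact Finset.sum_congr rfl fun i _ => by ring
  rw [Finset.sum_congr rfl fun d _ => e1 d,
    sum_triangle (n-1) (fun d i => w d * (((n-i-1).choose (d-i) : ℝ) * ((n-d-1).choose (i-1) : ℝ)) * t^i)]
  refine Finset.sum_congr rfl fun i hi => ?_
  simp only [mem_Icc] at hi
  rw [← Finset.Ico_add_one_right_eq_Icc, Finset.sum_Ico_eq_sum_range]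
  rw [show n-1+1-i = (n-i-1)+1 by omega]
  rw [Finset.sum_mul]
  refine Finset.sum_congr rfl fun j hj => ?_
  simp only [mem_range] at hj
  rw [show i+j-i = j by omega, show n-(i+j)-1 = (n-i-1)-j by omega]

theorem myI3 (m k : ℕ) (x : ℝ) :
    ∑ j ∈ range (m+1), (x + (j:ℝ)) * (x + (j:ℝ) - 1) * ((m.choose j : ℝ) * ((m-j).choose k : ℝ))
      = (m.choose k : ℝ) * 2^(m-k) *
        (((m-k:ℕ):ℝ) * (((m-k:ℕ):ℝ)-1)/4 + x*((m-k:ℕ):ℝ) + x*(x-1)) := by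
  have expand : ∀ j:ℕ, (x+(j:ℝ))*(x+(j:ℝ)-1)*((m.choose j:ℝ)*((m-j).choose k:ℝ))
      = (j:ℝ)*((j:ℝ)-1)*(m.choose j:ℝ)*((m-j).choose k:ℝ)
        + (2*x)*((j:ℝ)*(m.choose j:ℝ)*((m-j).choose k:ℝ))
        + (x*(x-1))*((m.choose j:ℝ)*((m-j).choose k:ℝ)) := fun j => by ring
  rw [Finset.sum_congr rfl fun j _ => expand j]
  rw [Finset.sum_add_distrib, Finset.sum_add_distrib, ← Finset.mul_sum, ← Finset.mul_sum]
  rw [myI2, myI1, myI0]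
  ring

theorem ccEval {n i : ℕ} (hn : 2 ≤ n) (h1 : 1 ≤ i) (h2 : i ≤ n-1) :
    ((n-i-1).choose (i-1) : ℝ) * 2^((n-i-1)-(i-1)) = cc n i := by
  unfold cc
  by_cases hg : 2*i ≤ n
  · rw [if_pos ⟨h1, hg⟩, show (n-i-1)-(i-1) = n-2*i by omega]
  · rw [if_neg (by omega), Nat.choose_eq_zero_of_lt (by omega)]
    simp

theorem cc_outside {n i : ℕ} (hn : 2 ≤ n) (h : ¬(1 ≤ i ∧ i ≤ n-1)) : cc n i = 0 := by
  unfold cc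
  rw [if_neg (by omega)]

noncomputable def aS (n : ℕ) (t : ℝ) : ℝ := ∑ i ∈ range (n+2), cc n i * t^i
noncomputable def s1S (n : ℕ) (t : ℝ) : ℝ := ∑ i ∈ range (n+2), (i:ℝ) * cc n i * t^i

theorem Icc_to_range {n : ℕ} (hn : 2 ≤ n) (f : ℕ → ℝ) (hf : ∀ i, cc n i = 0 → f i = 0) :
    ∑ i ∈ Icc 1 (n-1), f i = ∑ i ∈ range (n+2), f i := by
  refine Finset.sum_subset (fun x hx => ?_) (fun x _ hx => ?_)
  · simp only [mem_Icc, mem_range] at *; omega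
  · refine hf x (cc_outside hn ?_)
    simp only [mem_Icc] at hx; exact hx

theorem Q0 (n : ℕ) (t : ℝ) (hn : 2 ≤ n) : (hPoly n t).eval 1 = aS n t := by
  unfold hPoly aS
  rw [Polynomial.eval_finset_sum]
  simp only [Polynomial.eval_mul, Polynomial.eval_C, Polynomial.eval_pow, Polynomial.eval_X,
    one_pow, mul_one]
  have h1 : ∑ d ∈ Icc 1 (n-1), speyerG n d t = ∑ d ∈ Icc 1 (n-1), (fun _ => (1:ℝ)) d * speyerG n d t := by
    refine Finset.sum_congr rfl fun d _ => by ring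
  rw [h1, weightedSum n t hn]
  have h2 : ∀ i ∈ Icc 1 (n-1),
      (∑ j ∈ range ((n-i-1)+1), (1:ℝ) * (((n-i-1).choose j : ℝ) * (((n-i-1)-j).choose (i-1) : ℝ))) * t^i
      = cc n i * t^i := by
    intro i hi
    simp only [mem_Icc] at hi
    rw [Finset.sum_congr rfl fun j _ => one_mul _, myI0, ccEval hn hi.1 hi.2]
  rw [Finset.sum_congr rfl h2]
  exact Icc_to_range hn _ (fun i h => by rw [h, zero_mul])

theorem Q2 (n : ℕ) (t : ℝ) (hn : 2 ≤ n) :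
    (Polynomial.derivative (Polynomial.derivative (hPoly n t))).eval 1
      = (n:ℝ)*((n:ℝ)-1)/4 * aS n t - s1S n t / 2 := by
  unfold hPoly
  rw [Polynomial.derivative_sum]
  rw [Finset.sum_congr rfl fun d _ => Polynomial.derivative_C_mul_X_pow (speyerG n d t) d]
  rw [Polynomial.derivative_sum]
  rw [Finset.sum_congr rfl fun d _ =>
    Polynomial.derivative_C_mul_X_pow (speyerG n d t * (d:ℝ)) (d-1)]
  rw [Polynomial.eval_finset_sum]
  simp only [Polynomial.eval_mul, Polynomial.eval_C, Polynomial.eval_pow, Polynomial.eval_X,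
    one_pow, mul_one]
  have h0 : ∑ d ∈ Icc 1 (n-1), speyerG n d t * (d:ℝ) * ((d-1:ℕ):ℝ)
      = ∑ d ∈ Icc 1 (n-1), (fun d => (d:ℝ) * ((d:ℝ)-1)) d * speyerG n d t := by
    refine Finset.sum_congr rfl fun d hd => ?_
    simp only [mem_Icc] at hd
    rw [Nat.cast_sub hd.1]
    push_cast; ring
  rw [h0, weightedSum n t hn]
  have h2 : ∀ i ∈ Icc 1 (n-1),
      (∑ j ∈ range ((n-i-1)+1),
        ((i+j:ℕ):ℝ) * (((i+j:ℕ):ℝ)-1) * (((n-i-1).choose j : ℝ) * (((n-i-1)-j).choose (i-1) : ℝ))) * t^i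
      = ((n:ℝ)*((n:ℝ)-1)/4 * cc n i - (i:ℝ) * cc n i / 2) * t^i := by
    intro i hi
    simp only [mem_Icc] at hi
    have e : ∀ j ∈ range ((n-i-1)+1),
        ((i+j:ℕ):ℝ) * (((i+j:ℕ):ℝ)-1) * (((n-i-1).choose j : ℝ) * (((n-i-1)-j).choose (i-1) : ℝ))
        = ((i:ℝ) + (j:ℝ)) * ((i:ℝ) + (j:ℝ) - 1) * (((n-i-1).choose j : ℝ) * (((n-i-1)-j).choose (i-1) : ℝ)) := by
      intro j _; push_cast; ring
    rw [Finset.sum_congr rfl e, myI3]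
    congr 1
    set m := n-i-1 with hm
    set k := i-1 with hk
    by_cases hg : 2*i ≤ n
    · have hcc : cc n i = (m.choose k : ℝ) * 2^(m-k) := (ccEval hn hi.1 hi.2).symm
      rw [hcc]
      have hMk : ((m-k:ℕ):ℝ) = (n:ℝ) - 2*(i:ℝ) := by
        rw [show m-k = n-2*i by omega, Nat.cast_sub (by omega)]
        push_cast; ring
      rw [hMk]; ring
    · have hz : (m.choose k : ℝ) = 0 := by
        rw [Nat.choose_eq_zero_of_lt (by omega)]; simp
      have hcc : cc n i = 0 := by unfold cc; rw [if_neg (by omega)]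
      rw [hz, hcc]; ring
  rw [Finset.sum_congr rfl h2]
  have split : ∑ i ∈ Icc 1 (n-1), ((n:ℝ)*((n:ℝ)-1)/4 * cc n i - (i:ℝ) * cc n i / 2) * t^i
      = ∑ i ∈ range (n+2), ((n:ℝ)*((n:ℝ)-1)/4 * cc n i - (i:ℝ) * cc n i / 2) * t^i :=
    Icc_to_range hn _ (fun i h => by rw [h]; ring)
  rw [split]
  unfold aS s1S
  rw [Finset.mul_sum, Finset.sum_div, ← Finset.sum_sub_distrib]
  refine Finset.sum_congr rfl fun i _ => by ring

theorem cc_big {n i : ℕ} (h : n < 2*i) : cc n i = 0 := by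
  unfold cc; rw [if_neg (by omega)]

theorem pad (M N : ℕ) (h : M ≤ N) (g : ℕ → ℝ) (hg : ∀ i, M ≤ i → g i = 0) :
    ∑ i ∈ range M, g i = ∑ i ∈ range N, g i :=
  Finset.sum_subset (Finset.range_subset_range.2 h) (fun x _ hx => hg x (by simpa using hx))

theorem shiftSum (f g : ℕ → ℝ) (t : ℝ) (N : ℕ) (h0 : g 0 = 0) (hs : ∀ i, g (i+1) = f i) :
    t * ∑ i ∈ range N, f i * t^i = ∑ i ∈ range (N+1), g i * t^i := by
  rw [Finset.sum_range_succ']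
  simp only [hs, h0, zero_mul, add_zero, pow_succ]
  rw [Finset.mul_sum]
  exact Finset.sum_congr rfl fun i _ => by ring

theorem aS_rec (n : ℕ) (t : ℝ) (hn : 2 ≤ n) :
    aS (n+1) t = 2 * aS n t + t * aS (n-1) t := by
  have hC : aS (n+1) t = ∑ i ∈ range (n+3), cc (n+1) i * t^i := by
    unfold aS; norm_num
  have hA : aS n t = ∑ i ∈ range (n+3), cc n i * t^i := by
    unfold aS
    exact pad (n+2) (n+3) (by omega) _ (fun i hi => by rw [cc_big (by omega)]; ring)
  have hA' : t * aS (n-1) t = ∑ i ∈ range (n+3), cc (n-1) (i-1) * t^i := by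
    unfold aS
    rw [show (n-1)+2 = n+1 by omega]
    rw [shiftSum (fun i => cc (n-1) i) (fun i => cc (n-1) (i-1)) t (n+1) (by simp [cc_zero])
      (fun i => by simp)]
    exact pad (n+2) (n+3) (by omega) _ (fun i hi => by rw [cc_big (by omega)]; ring)
  rw [hC, hA, hA', Finset.mul_sum, ← Finset.sum_add_distrib]
  refine Finset.sum_congr rfl fun i _ => ?_
  have h := ccRec n i hn
  rw [h]; ring

theorem mainID (n : ℕ) (t : ℝ) (hn : 2 ≤ n) :
    (t+1) * ((n:ℝ)*((n:ℝ)-1) * aS n t - 2 * s1S n t)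
      = ((n:ℝ)-1) * aS (n+1) t + (n:ℝ)*(((n:ℝ)-2)*t + (n:ℝ)-3) * aS n t := by
  have hC : aS (n+1) t = ∑ i ∈ range (n+3), cc (n+1) i * t^i := by
    unfold aS; norm_num
  have hA : aS n t = ∑ i ∈ range (n+3), cc n i * t^i := by
    unfold aS
    exact pad (n+2) (n+3) (by omega) _ (fun i hi => by rw [cc_big (by omega)]; ring)
  have hB : s1S n t = ∑ i ∈ range (n+3), (i:ℝ) * cc n i * t^i := by
    unfold s1S
    exact pad (n+2) (n+3) (by omega) _ (fun i hi => by rw [cc_big (by omega)]; ring)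
  have hA' : t * aS n t = ∑ i ∈ range (n+3), cc n (i-1) * t^i := by
    unfold aS
    rw [shiftSum (fun i => cc n i) (fun i => cc n (i-1)) t (n+2) (by simp [cc_zero])
      (fun i => by simp)]
  have hB' : t * s1S n t = ∑ i ∈ range (n+3), ((i:ℝ)-1) * cc n (i-1) * t^i := by
    unfold s1S
    rw [shiftSum (fun i => (i:ℝ) * cc n i) (fun i => ((i:ℝ)-1) * cc n (i-1)) t (n+2)
      (by simp [cc_zero]) (fun i => by push_cast; ring_nf)]
  calc (t+1) * ((n:ℝ)*((n:ℝ)-1) * aS n t - 2 * s1S n t)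
      = (n:ℝ)*((n:ℝ)-1)*(t * aS n t) + (n:ℝ)*((n:ℝ)-1)*(aS n t)
        - 2*(t * s1S n t) - 2*(s1S n t) := by ring
    _ = (n:ℝ)*((n:ℝ)-1)*(∑ i ∈ range (n+3), cc n (i-1) * t^i)
        + (n:ℝ)*((n:ℝ)-1)*(∑ i ∈ range (n+3), cc n i * t^i)
        - 2*(∑ i ∈ range (n+3), ((i:ℝ)-1) * cc n (i-1) * t^i)
        - 2*(∑ i ∈ range (n+3), (i:ℝ) * cc n i * t^i) := by rw [hA', hA, hB', hB]
    _ = ∑ i ∈ range (n+3),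
          ((n:ℝ)*((n:ℝ)-1)*(cc n (i-1) * t^i) + (n:ℝ)*((n:ℝ)-1)*(cc n i * t^i)
            - 2*(((i:ℝ)-1) * cc n (i-1) * t^i) - 2*((i:ℝ) * cc n i * t^i)) := by
        simp only [Finset.sum_sub_distrib, Finset.sum_add_distrib, ← Finset.mul_sum]
    _ = ∑ i ∈ range (n+3),
          (((n:ℝ)-1) * (cc (n+1) i * t^i) + (n:ℝ)*((n:ℝ)-2)*(cc n (i-1) * t^i)
            + (n:ℝ)*((n:ℝ)-3)*(cc n i * t^i)) := by
        refine Finset.sum_congr rfl fun i _ => ?_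
        have h := ccClean n i hn
        linear_combination (t^i) * h
    _ = ((n:ℝ)-1) * (∑ i ∈ range (n+3), cc (n+1) i * t^i)
        + (n:ℝ)*((n:ℝ)-2)*(∑ i ∈ range (n+3), cc n (i-1) * t^i)
        + (n:ℝ)*((n:ℝ)-3)*(∑ i ∈ range (n+3), cc n i * t^i) := by
        simp only [Finset.sum_add_distrib, ← Finset.mul_sum]
    _ = ((n:ℝ)-1) * aS (n+1) t + (n:ℝ)*(((n:ℝ)-2)*t + (n:ℝ)-3) * aS n t := by
        rw [← hC, ← hA', ← hA]
        ring

theorem aS_pos (n : ℕ) (t : ℝ) (ht : 0 < t) (hn : 2 ≤ n) : 0 < aS n t := by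
  unfold aS
  refine Finset.sum_pos' (fun i _ => mul_nonneg (cc_nonneg n i) (by positivity)) ⟨1, ?_, ?_⟩
  · simp only [mem_range]; omega
  · rw [cc_one hn]; positivity

theorem aS_two (t : ℝ) : aS 2 t = t := by
  unfold aS cc
  norm_num [Finset.sum_range_succ]

theorem aS_three (t : ℝ) : aS 3 t = 2*t := by
  unfold aS cc
  norm_num [Finset.sum_range_succ]

theorem sqrt_facts (t : ℝ) (ht : 0 < t) :
    1 < Real.sqrt (t+1) ∧ (Real.sqrt (t+1))^2 = t+1 := by
  constructor
  · have h4 : Real.sqrt 1 < Real.sqrt (t+1) := Real.sqrt_lt_sqrt (by norm_num) (by linarith)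
    rwa [Real.sqrt_one] at h4
  · exact Real.sq_sqrt (by linarith)

theorem binet_aux (t : ℝ) (α β A B : ℝ)
    (hα : α^2 = 2*α + t) (hβ : β^2 = 2*β + t)
    (hb2 : aS 2 t = A*α^2 + B*β^2) (hb3 : aS 3 t = A*α^3 + B*β^3) :
    ∀ n, 2 ≤ n → aS n t = A*α^n + B*β^n := by
  intro n hn
  induction n using Nat.strong_induction_on with
  | _ n ih =>
    match n, hn with
    | 2, _ => exact hb2
    | 3, _ => exact hb3
    | (m+4), _ =>
      have h1 : aS (m+3) t = A*α^(m+3) + B*β^(m+3) := ih (m+3) (by omega) (by omega)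
      have h2 : aS (m+2) t = A*α^(m+2) + B*β^(m+2) := ih (m+2) (by omega) (by omega)
      have hrec := aS_rec (m+3) t (by omega)
      rw [show m+3+1 = m+4 from rfl, show m+3-1 = m+2 from rfl, h1, h2] at hrec
      rw [hrec]
      linear_combination (-(A*α^(m+2))) * hα + (-(B*β^(m+2))) * hβ

theorem ratio_tendsto (t : ℝ) (ht : 0 < t) :
    Filter.Tendsto (fun n => aS (n+1) t / aS n t) Filter.atTop
      (nhds (1 + Real.sqrt (t+1))) := by
  obtain ⟨hs1, hs2⟩ := sqrt_facts t ht
  set s := Real.sqrt (t+1) with hs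
  obtain ⟨A, hA⟩ : ∃ x : ℝ, x = t/((1+s)*(2*s)) := ⟨_, rfl⟩
  obtain ⟨B, hB⟩ : ∃ x : ℝ, x = t/((s-1)*(2*s)) := ⟨_, rfl⟩
  have hsne : s ≠ 0 := by positivity
  have hs1ne : s - 1 ≠ 0 := by linarith
  have hs1ne' : 1 + s ≠ 0 := by linarith
  have hαq : (1+s)^2 = 2*(1+s) + t := by nlinarith [hs2]
  have hβq : (1-s)^2 = 2*(1-s) + t := by nlinarith [hs2]
  have hApos : 0 < A := by rw [hA]; positivity
  have hbin := binet_aux t (1+s) (1-s) A B hαq hβq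
    (by rw [aS_two, hA, hB]; field_simp; ring)
    (by rw [aS_three, hA, hB]; field_simp; ring) 
  have hαpos : (0:ℝ) < 1 + s := by linarith
  have hαne : (1+s) ≠ 0 := ne_of_gt hαpos
  -- aS n / α^n → A
  have habs : |(1-s)/(1+s)| < 1 := by
    rw [abs_div, abs_of_pos hαpos, div_lt_one hαpos, abs_lt]
    constructor <;> linarith
  have hpow0 : Filter.Tendsto (fun n : ℕ => ((1-s)/(1+s))^n) Filter.atTop (nhds 0) :=
    tendsto_pow_atTop_nhds_zero_iff.2 habs
  have hT : Filter.Tendsto (fun n : ℕ => aS n t / (1+s)^n) Filter.atTop (nhds A) := by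
    have hg : Filter.Tendsto (fun n : ℕ => A + B * ((1-s)/(1+s))^n) Filter.atTop (nhds (A + B*0)) :=
      Filter.Tendsto.add tendsto_const_nhds (Filter.Tendsto.const_mul B hpow0)
    rw [mul_zero, add_zero] at hg
    refine Filter.Tendsto.congr' ?_ hg
    filter_upwards [Filter.eventually_atTop.2 ⟨2, fun n hn => hbin n hn⟩] with n hb
    rw [div_pow, hb]
    field_simp
  have hT1 : Filter.Tendsto (fun n : ℕ => aS (n+1) t / (1+s)^(n+1)) Filter.atTop (nhds A) :=
    hT.comp (Filter.tendsto_add_atTop_nat 1)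
  have hQ : Filter.Tendsto
      (fun n : ℕ => (aS (n+1) t / (1+s)^(n+1)) / (aS n t / (1+s)^n))
      Filter.atTop (nhds (A/A)) := hT1.div hT (ne_of_gt hApos)
  rw [div_self (ne_of_gt hApos)] at hQ
  have hQ2 := hQ.const_mul (1+s)
  rw [mul_one] at hQ2
  refine Filter.Tendsto.congr' ?_ hQ2
  filter_upwards [Filter.eventually_atTop.2 ⟨2, fun (n:ℕ) (hn : 2 ≤ n) => hn⟩] with n hn
  have hane : aS n t ≠ 0 := ne_of_gt (aS_pos n t ht hn)
  have hpne : (1+s)^n ≠ 0 := pow_ne_zero _ hαne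
  field_simp
  ring


theorem hPoly_variance (t : ℝ) (ht : 0 < t) (σ2 : ℕ → ℝ)
    (hσ : ∀ n : ℕ, σ2 n =
      (Polynomial.derivative (Polynomial.derivative (hPoly n t))).eval 1 / (hPoly n t).eval 1
        + (n : ℝ) / 2 - (n : ℝ) ^ 2 / 4) :
    (∀ n : ℕ, 2 ≤ n →
      σ2 n = ((n : ℝ) - 1) / (4 * (t + 1)) * ((hPoly (n + 1) t).eval 1 / (hPoly n t).eval 1)
        - (n : ℝ) / (4 * (t + 1))) ∧
    Filter.Tendsto (fun n : ℕ => σ2 n / (n : ℝ)) Filter.atTop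
      (nhds (1 / (4 * Real.sqrt (t + 1)))) ∧
    Filter.Tendsto σ2 Filter.atTop Filter.atTop := by
  have ht1 : (0:ℝ) < t + 1 := by linarith
  have part1 : ∀ n : ℕ, 2 ≤ n →
      σ2 n = ((n : ℝ) - 1) / (4 * (t + 1)) * ((hPoly (n + 1) t).eval 1 / (hPoly n t).eval 1)
        - (n : ℝ) / (4 * (t + 1)) := by
    intro n hn
    rw [hσ n, Q2 n t hn, Q0 n t hn, Q0 (n+1) t (by omega)]
    have hapos := aS_pos n t ht hn
    have hane : aS n t ≠ 0 := ne_of_gt hapos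
    have key := mainID n t hn
    have ht1ne : t + 1 ≠ 0 := ne_of_gt ht1
    field_simp
    linear_combination 2 * key
  refine ⟨part1, ?_, ?_⟩
  all_goals {
    obtain ⟨hs1, hs2⟩ := sqrt_facts t ht
    have hspos : 0 < Real.sqrt (t+1) := by linarith
    set s := Real.sqrt (t+1) with hs
    have hr := ratio_tendsto t ht
    have hσ2 : ∀ n : ℕ, 2 ≤ n →
        σ2 n = ((n:ℝ)-1)/(4*(t+1)) * (aS (n+1) t / aS n t) - (n:ℝ)/(4*(t+1)) := by
      intro n hn
      rw [part1 n hn, Q0 n t hn, Q0 (n+1) t (by omega)]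
    have part2 : Filter.Tendsto (fun n : ℕ => σ2 n / (n : ℝ)) Filter.atTop
        (nhds (1 / (4 * s))) := by
      have h1 : Filter.Tendsto (fun n : ℕ => 1 - (n:ℝ)⁻¹) Filter.atTop (nhds (1 - 0)) :=
        Filter.Tendsto.sub tendsto_const_nhds tendsto_inv_atTop_nhds_zero_nat
      rw [sub_zero] at h1
      have h2 := h1.mul hr
      rw [one_mul] at h2
      have h3 := h2.sub (tendsto_const_nhds (x := (1:ℝ)))
      have h4 := h3.mul (tendsto_const_nhds (x := (4*(t+1))⁻¹))
      have hval : ((1 + s) - 1) * (4*(t+1))⁻¹ = 1 / (4 * s) := by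
        rw [← hs2]; field_simp; ring
      rw [hval] at h4
      refine Filter.Tendsto.congr' ?_ h4
      filter_upwards [Filter.eventually_atTop.2 ⟨2, fun (n:ℕ) (hn : 2 ≤ n) => hn⟩] with n hn
      have hane : aS n t ≠ 0 := ne_of_gt (aS_pos n t ht hn)
      have hnne : (n:ℝ) ≠ 0 := Nat.cast_ne_zero.2 (by omega)
      rw [hσ2 n hn]
      field_simp
    refine ?_
    first
    | exact part2
    | { have hLpos : 0 < 1 / (4*s) := by positivity
        have h5 := Filter.Tendsto.pos_mul_atTop hLpos part2 tendsto_natCast_atTop_atTop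
        refine Filter.Tendsto.congr' ?_ h5
        filter_upwards [Filter.eventually_atTop.2 ⟨1, fun (n:ℕ) (hn : 1 ≤ n) => hn⟩] with n hn
        have hnne : (n:ℝ) ≠ 0 := Nat.cast_ne_zero.2 (by omega)
        rw [div_mul_cancel₀ _ hnne] }
  }
end

section
/- If f is a real polynomial with only real zeros, then f'(x)² − f(x)·f''(x) ≥ 0 for all real x (the Laguerre inequality). -/
open Polynomial

lemma laguerre_aux : ∀ (n : ℕ) (f : Polynomial ℝ), f.natDegree ≤ n →
    (∀ z : ℂ, Polynomial.aeval z f = 0 → z.im = 0) → ∀ x : ℝ,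
    0 ≤ (Polynomial.derivative f).eval x ^ 2
        - f.eval x * (Polynomial.derivative (Polynomial.derivative f)).eval x := by
  intro n
  induction n with
  | zero =>
    intro f hdeg _ x
    have hf : f = C (f.coeff 0) := Polynomial.eq_C_of_natDegree_le_zero hdeg
    rw [hf]
    simp
  | succ n ih =>
    intro f hdeg hf x
    by_cases h0 : f = 0
    · simp [h0]
    by_cases hdeg' : f.natDegree ≤ n
    · exact ih f hdeg' hf x
    have hpos : 0 < f.natDegree := by omega
    -- f has a complex root
    have hmapne : f.map (algebraMap ℝ ℂ) ≠ 0 := by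
      simpa [Polynomial.map_eq_zero] using h0
    have hdegmap : 0 < (f.map (algebraMap ℝ ℂ)).degree := by
      rw [Polynomial.degree_map_eq_of_injective (algebraMap ℝ ℂ).injective]
      exact Polynomial.natDegree_pos_iff_degree_pos.mp hpos
    obtain ⟨z, hz⟩ := Complex.exists_root hdegmap
    have hz' : Polynomial.aeval z f = 0 := by
      rwa [Polynomial.aeval_def, ← Polynomial.eval_map]
    have him : z.im = 0 := hf z hz'
    set r : ℝ := z.re with hr
    have hzr : z = (r : ℂ) := Complex.ext rfl him
    have hroot : f.eval r = 0 := by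
      have h2 : (algebraMap ℝ ℂ) (f.eval r) = 0 := by
        rw [← Polynomial.eval₂_at_apply, ← Polynomial.eval_map]
        have : ((algebraMap ℝ ℂ) r) = z := by rw [hzr]; exact congrFun Complex.coe_algebraMap r
        rw [this]; exact hz
      simpa using h2
    obtain ⟨g, hg⟩ : (X - C r) ∣ f := Polynomial.dvd_iff_isRoot.mpr hroot
    have hgne : g ≠ 0 := by
      intro h; apply h0; rw [hg, h, mul_zero]
    have hgdeg : g.natDegree ≤ n := by
      have : f.natDegree = 1 + g.natDegree := by
        rw [hg, Polynomial.natDegree_mul (Polynomial.X_sub_C_ne_zero r) hgne,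
          Polynomial.natDegree_X_sub_C]
      omega
    have hgroots : ∀ z : ℂ, Polynomial.aeval z g = 0 → z.im = 0 := by
      intro w hw
      apply hf w
      rw [hg, map_mul, hw, mul_zero]
    have IH := ih g hgdeg hgroots x
    have hd : Polynomial.derivative f = g + (X - C r) * Polynomial.derivative g := by
      rw [hg]
      simp [Polynomial.derivative_mul]
    have hdd : Polynomial.derivative (Polynomial.derivative f) =
        2 * Polynomial.derivative g
          + (X - C r) * Polynomial.derivative (Polynomial.derivative g) := by
      rw [hd]
      simp [Polynomial.derivative_mul]
      ring
    rw [hdd, hd, hg]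
    simp only [Polynomial.eval_add, Polynomial.eval_mul, Polynomial.eval_sub,
      Polynomial.eval_X, Polynomial.eval_C, Polynomial.eval_ofNat]
    nlinarith [mul_nonneg (sq_nonneg (x - r)) IH, sq_nonneg (g.eval x)]

theorem laguerre_inequality (f : Polynomial ℝ)
    (hf : ∀ z : ℂ, Polynomial.aeval z f = 0 → z.im = 0) (x : ℝ) :
    0 ≤ (Polynomial.derivative f).eval x ^ 2
        - f.eval x * (Polynomial.derivative (Polynomial.derivative f)).eval x :=
  laguerre_aux f.natDegree f le_rfl hf x
end
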